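/- arXiv:1212.5117 — 4 statements merged into one kernel-verified Lean document; each statement's English description precedes it below -/
import Mathlib

section
/- Let N ≥ 1, let a ≥ 0 and let (E_x)_{x∈V_N} be nonnegative real numbers. Then for every x, y ∈ V_N and every t ≥ 0, |(exp(tL))(x,y) − 2^{−N}| ≤ e^{−2t}, where exp denotes the matrix exponential. -/
open MeasureTheory ProbabilityTheory Filter

/-- `x ∼ y`: the vertices `x, y` of the hypercube `V_N = {0,1}^N` differ in exactly
one coordinate. -/
def nbr {N : ℕ} (x y : Fin N → Bool) : Prop :=
  (Finset.univ.filter fun i => x i ≠ y i).card = 1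

instance {N : ℕ} (x y : Fin N → Bool) : Decidable (nbr x y) :=
  inferInstanceAs (Decidable (_ = 1))

/-- The generator matrix `L` of the walk with jump rates `ω(x,y) = e^{a(E_x+E_y)}`. -/
noncomputable def gen (N : ℕ) (a : ℝ) (E : (Fin N → Bool) → ℝ) :
    Matrix (Fin N → Bool) (Fin N → Bool) ℝ := fun x y =>
  if x = y then -(∑ z, if nbr x z then Real.exp (a * (E x + E z)) else 0)
  else if nbr x y then Real.exp (a * (E x + E y)) else 0

namespace HCproof
open Matrix

variable {N : ℕ}

/-- flip coordinate `i` -/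
def flipv (i : Fin N) (x : Fin N → Bool) : Fin N → Bool := Function.update x i (!x i)

@[simp] lemma flipv_same (i : Fin N) (x : Fin N → Bool) : flipv i x i = !x i := by
  simp [flipv]

lemma flipv_other {i j : Fin N} (h : j ≠ i) (x : Fin N → Bool) : flipv i x j = x j := by
  simp [flipv, Function.update_of_ne h]

@[simp] lemma flipv_flipv (i : Fin N) (x : Fin N → Bool) : flipv i (flipv i x) = x := by
  funext j
  rcases eq_or_ne j i with rfl | h
  · simp
  · simp [flipv_other h]

lemma nbr_flipv (i : Fin N) (x : Fin N → Bool) : nbr x (flipv i x) := by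
  unfold nbr
  have : (Finset.univ.filter fun j => x j ≠ flipv i x j) = {i} := by
    ext j
    rcases eq_or_ne j i with rfl | h
    · simp
    · simp [flipv_other h, h]
  rw [this]; simp

lemma nbr_iff {x y : Fin N → Bool} : nbr x y ↔ ∃ i, y = flipv i x := by
  constructor
  · intro h
    obtain ⟨i, hi⟩ := Finset.card_eq_one.mp h
    refine ⟨i, funext fun j => ?_⟩
    rcases eq_or_ne j i with rfl | hji
    · have : x j ≠ y j := by
        have : j ∈ Finset.univ.filter fun k => x k ≠ y k := hi ▸ Finset.mem_singleton_self j
        simpa using this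
      simp only [flipv_same]
      cases xj : x j <;> cases yj : y j <;> simp_all
    · have : j ∉ Finset.univ.filter fun k => x k ≠ y k := by
        rw [hi]; simpa using hji
      have hxy : x j = y j := by simpa using this
      rw [flipv_other hji, hxy]
  · rintro ⟨i, rfl⟩; exact nbr_flipv i x

lemma flipv_injective (x : Fin N → Bool) : Function.Injective (fun i => flipv i x) := by
  intro i j h
  by_contra hij
  have h2 := congrFun h i
  simp only [flipv_same, flipv_other hij] at h2
  cases x i <;> simp_all

/-- sum over neighbours -/
lemma sum_nbr (x : Fin N → Bool) (f : (Fin N → Bool) → ℝ) :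
    (∑ y, if nbr x y then f y else 0) = ∑ i, f (flipv i x) := by
  rw [Finset.sum_ite, Finset.sum_const_zero, add_zero]
  refine (Finset.sum_nbij (fun i => flipv i x) ?_ ?_ ?_ ?_).symm
  · intro i _; simpa using nbr_flipv i x
  · intro i _ j _ h; exact flipv_injective x h
  · intro y hy
    simp only [Finset.coe_filter, Set.mem_setOf_eq] at hy
    obtain ⟨i, rfl⟩ := nbr_iff.mp hy.2
    exact ⟨i, by simp⟩
  · intro i _; rfl


/-- Walsh character -/
def chi (s x : Fin N → Bool) : ℝ := ∏ i, (if s i && x i then (-1:ℝ) else 1)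

lemma chi_orth (x y : Fin N → Bool) :
    ∑ s : Fin N → Bool, chi s x * chi s y = if x = y then (2:ℝ)^N else 0 := by
  have h1 : ∀ s : Fin N → Bool, chi s x * chi s y
      = ∏ i, ((if s i && x i then (-1:ℝ) else 1) * (if s i && y i then (-1:ℝ) else 1)) := by
    intro s; rw [chi, chi, ← Finset.prod_mul_distrib]
  simp_rw [h1]
  rw [← Fintype.prod_sum (fun i (b : Bool) =>
      (if b && x i then (-1:ℝ) else 1) * (if b && y i then (-1:ℝ) else 1))]
  have h2 : ∀ i, (∑ b : Bool, (if b && x i then (-1:ℝ) else 1) * (if b && y i then (-1:ℝ) else 1))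
      = if x i = y i then 2 else 0 := by
    intro i
    cases hx : x i <;> cases hy : y i <;> norm_num [Fintype.sum_bool]
  rw [Fintype.prod_congr _ _ h2]
  by_cases hxy : x = y
  · subst hxy; simp
  · have : ∃ i, x i ≠ y i := by
      by_contra h
      push_neg at h
      exact hxy (funext h)
    obtain ⟨i, hi⟩ := this
    rw [if_neg hxy]
    exact Finset.prod_eq_zero (Finset.mem_univ i) (by simp [hi])

/-- Fourier coefficient -/
def fc (w : (Fin N → Bool) → ℝ) (s : Fin N → Bool) : ℝ := ∑ x, w x * chi s x

lemma parseval (w : (Fin N → Bool) → ℝ) :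
    ∑ s : Fin N → Bool, (fc w s)^2 = 2^N * ∑ x, (w x)^2 := by
  have : ∀ s : Fin N → Bool, (fc w s)^2 = ∑ x, ∑ y, w x * w y * (chi s x * chi s y) := by
    intro s
    rw [fc, sq, Finset.sum_mul_sum]
    congr 1; funext x; congr 1; funext y; ring
  simp_rw [this]
  rw [Finset.sum_comm]
  have : ∀ x, ∑ s : Fin N → Bool, ∑ y, w x * w y * (chi s x * chi s y)
      = 2^N * (w x)^2 := by
    intro x
    rw [Finset.sum_comm]
    have hx : ∀ y, ∑ s : Fin N → Bool, w x * w y * (chi s x * chi s y)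
        = w x * w y * (if x = y then (2:ℝ)^N else 0) := by
      intro y; rw [← Finset.mul_sum, chi_orth]
    simp_rw [hx, mul_ite, mul_zero]
    rw [Finset.sum_ite_eq Finset.univ x (fun y => w x * w y * (2:ℝ)^N)]
    simp; ring
  simp_rw [this]
  rw [Finset.mul_sum]


lemma chi_flipv (s : Fin N → Bool) (i : Fin N) (x : Fin N → Bool) :
    chi s (flipv i x) = (if s i then (-1:ℝ) else 1) * chi s x := by
  rw [chi, chi, ← Finset.mul_prod_erase Finset.univ _ (Finset.mem_univ i),
    ← Finset.mul_prod_erase Finset.univ (fun j => if s j && x j then (-1:ℝ) else 1)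
      (Finset.mem_univ i), ← mul_assoc]
  have h1 : ∀ j ∈ Finset.univ.erase i,
      (if s j && flipv i x j then (-1:ℝ) else 1) = if s j && x j then (-1:ℝ) else 1 := by
    intro j hj
    rw [flipv_other (Finset.mem_erase.mp hj).1]
  rw [Finset.prod_congr rfl h1]
  congr 1
  rw [flipv_same]
  cases hs : s i <;> cases hx : x i <;> norm_num

lemma fc_diff (w : (Fin N → Bool) → ℝ) (i : Fin N) (s : Fin N → Bool) :
    fc (fun x => w x - w (flipv i x)) s = if s i then 2 * fc w s else 0 := by
  have h1 : fc (fun x => w x - w (flipv i x)) s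
      = fc w s - ∑ x, w (flipv i x) * chi s x := by
    rw [fc, fc]
    simp_rw [sub_mul]
    rw [Finset.sum_sub_distrib]
  have e : Equiv.Perm (Fin N → Bool) :=
    ⟨flipv i, flipv i, fun x => flipv_flipv i x, fun x => flipv_flipv i x⟩
  have h2 : ∑ x, w (flipv i x) * chi s x = ∑ x, w x * chi s (flipv i x) := by
    refine Fintype.sum_equiv ⟨flipv i, flipv i, fun x => flipv_flipv i x,
      fun x => flipv_flipv i x⟩ _ _ ?_
    intro x
    simp [flipv_flipv]
  rw [h1, h2]
  simp_rw [chi_flipv]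
  cases hs : s i
  · simp [fc, mul_comm]
  · simp only [if_true]
    rw [fc]
    simp_rw [neg_one_mul, mul_neg]
    rw [Finset.sum_neg_distrib]
    ring


lemma chi_zero (x : Fin N → Bool) : chi (fun _ => false) x = 1 := by
  simp [chi]

lemma fc_zero (w : (Fin N → Bool) → ℝ) : fc w (fun _ => false) = ∑ x, w x := by
  simp [fc, chi_zero]

lemma poincare (w : (Fin N → Bool) → ℝ) :
    4 * 2^N * (∑ x, (w x)^2) - 4 * (∑ x, w x)^2
      ≤ 2^N * ∑ i : Fin N, ∑ x, (w x - w (flipv i x))^2 := by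
  have key : (2:ℝ)^N * ∑ i : Fin N, ∑ x, (w x - w (flipv i x))^2
      = ∑ s : Fin N → Bool, ∑ i : Fin N, (if s i then 4 * (fc w s)^2 else 0) := by
    rw [Finset.mul_sum]
    have h1 : ∀ i : Fin N, (2:ℝ)^N * ∑ x, (w x - w (flipv i x))^2
        = ∑ s : Fin N → Bool, (if s i then 4 * (fc w s)^2 else 0) := by
      intro i
      rw [← parseval (fun x => w x - w (flipv i x))]
      congr 1; funext s
      rw [fc_diff]
      cases s i <;> simp <;> ring
    simp_rw [h1]
    rw [Finset.sum_comm]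
  rw [key]
  have h2 : ∀ s : Fin N → Bool,
      (if s = (fun _ => false) then 0 else 4 * (fc w s)^2)
        ≤ ∑ i : Fin N, (if s i then 4 * (fc w s)^2 else 0) := by
    intro s
    by_cases hs : s = fun _ => false
    · simp only [hs, if_pos rfl]
      exact Finset.sum_nonneg fun i _ => by positivity
    · rw [if_neg hs]
      have : ∃ i, s i = true := by
        by_contra h
        push_neg at h
        exact hs (funext fun i => by simpa using h i)
      obtain ⟨i, hi⟩ := this
      have := Finset.single_le_sum (f := fun i => if s i then 4 * (fc w s)^2 else 0)
        (fun j _ => by positivity) (Finset.mem_univ i)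
      simpa [hi] using this
  refine le_trans ?_ (Finset.sum_le_sum fun s _ => h2 s)
  have h3 : ∑ s : Fin N → Bool, (if s = (fun _ => false) then 0 else 4 * (fc w s)^2)
      = 4 * (∑ s : Fin N → Bool, (fc w s)^2) - 4 * (fc w (fun _ => false))^2 := by
    have h4 : ∀ s : Fin N → Bool, (if s = (fun _ => false) then (0:ℝ) else 4 * (fc w s)^2)
        = 4 * (fc w s)^2 - (if s = (fun _ => false) then 4 * (fc w s)^2 else 0) := by
      intro s; by_cases h : s = fun _ => false <;> simp [h]
    simp_rw [h4]
    rw [Finset.sum_sub_distrib, Finset.sum_ite_eq' Finset.univ (fun _ => false)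
      (fun s => 4 * (fc w s)^2), ← Finset.mul_sum]
    simp
  rw [h3, parseval w, fc_zero]
  apply le_of_eq; ring


lemma nbr_irrefl (x : Fin N → Bool) : ¬ nbr x x := by
  unfold nbr
  simp

lemma sum_flipv (i : Fin N) (f : (Fin N → Bool) → ℝ) :
    ∑ x, f (flipv i x) = ∑ x, f x := by
  exact Fintype.sum_equiv ⟨flipv i, flipv i, fun x => flipv_flipv i x,
    fun x => flipv_flipv i x⟩ _ _ (fun x => rfl)

variable (a : ℝ) (E : (Fin N → Bool) → ℝ)

/-- edge weight towards the `i`-flip -/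
noncomputable def ome (x : Fin N → Bool) (i : Fin N) : ℝ :=
  Real.exp (a * (E x + E (flipv i x)))

lemma ome_symm (x : Fin N → Bool) (i : Fin N) : ome a E (flipv i x) i = ome a E x i := by
  rw [ome, ome, flipv_flipv, add_comm]

lemma gen_mulVec (w : (Fin N → Bool) → ℝ) (x : Fin N → Bool) :
    (gen N a E *ᵥ w) x = ∑ i, ome a E x i * (w (flipv i x) - w x) := by
  rw [Matrix.mulVec]
  show ∑ y, gen N a E x y * w y = _
  have h : ∀ y, gen N a E x y * w y
      = (if nbr x y then Real.exp (a * (E x + E y)) * w y else 0)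
        + (if x = y then
            -(∑ z, if nbr x z then Real.exp (a * (E x + E z)) else 0) * w y else 0) := by
    intro y
    rcases eq_or_ne x y with rfl | hxy
    · simp [gen, nbr_irrefl]
    · simp [gen, hxy]
  simp_rw [h]
  rw [Finset.sum_add_distrib]
  have h1 : (∑ y, if nbr x y then Real.exp (a * (E x + E y)) * w y else 0)
      = ∑ i, ome a E x i * w (flipv i x) := by
    rw [sum_nbr x (fun y => Real.exp (a * (E x + E y)) * w y)]
    rfl
  have h2 : (∑ y, if x = y then
      -(∑ z, if nbr x z then Real.exp (a * (E x + E z)) else 0) * w y else 0)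
      = -(∑ i, ome a E x i) * w x := by
    rw [Finset.sum_ite_eq Finset.univ x, if_pos (Finset.mem_univ x),
      sum_nbr x (fun z => Real.exp (a * (E x + E z)))]
    rfl
  rw [h1, h2]
  rw [neg_mul, Finset.sum_mul, ← sub_eq_add_neg, ← Finset.sum_sub_distrib]
  congr 1; funext i; ring

lemma gen_quad (w : (Fin N → Bool) → ℝ) :
    w ⬝ᵥ (gen N a E *ᵥ w)
      = -(1/2) * ∑ x, ∑ i, ome a E x i * (w x - w (flipv i x))^2 := by
  have hlhs : w ⬝ᵥ (gen N a E *ᵥ w)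
      = (∑ x, ∑ i, ome a E x i * (w x * w (flipv i x)))
        - ∑ x, ∑ i, ome a E x i * (w x)^2 := by
    rw [dotProduct, ← Finset.sum_sub_distrib]
    congr 1; funext x
    rw [gen_mulVec, Finset.mul_sum, ← Finset.sum_sub_distrib]
    congr 1; funext i; ring
  have hsym : ∑ x, ∑ i, ome a E x i * (w (flipv i x))^2
      = ∑ x, ∑ i, ome a E x i * (w x)^2 := by
    rw [Finset.sum_comm]
    conv_rhs => rw [Finset.sum_comm]
    congr 1; funext i
    calc ∑ x, ome a E x i * (w (flipv i x))^2
        = ∑ x, ome a E (flipv i x) i * (w (flipv i (flipv i x)))^2 := by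
          rw [sum_flipv i (fun x => ome a E x i * (w (flipv i x))^2)]
      _ = ∑ x, ome a E x i * (w x)^2 := by
          congr 1; funext x; rw [ome_symm, flipv_flipv]
  have expand : ∑ x, ∑ i, ome a E x i * (w x - w (flipv i x))^2
      = (∑ x, ∑ i, ome a E x i * (w x)^2)
        + (∑ x, ∑ i, ome a E x i * (w (flipv i x))^2)
        - 2 * ∑ x, ∑ i, ome a E x i * (w x * w (flipv i x)) := by
    rw [Finset.mul_sum, ← Finset.sum_add_distrib, ← Finset.sum_sub_distrib]
    congr 1; funext x
    rw [Finset.mul_sum, ← Finset.sum_add_distrib, ← Finset.sum_sub_distrib]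
    congr 1; funext i; ring
  rw [hlhs, expand, hsym]
  ring


lemma one_le_ome (ha : 0 ≤ a) (hE : ∀ x, 0 ≤ E x) (x : Fin N → Bool) (i : Fin N) :
    1 ≤ ome a E x i := by
  rw [ome]
  have : 0 ≤ a * (E x + E (flipv i x)) := mul_nonneg ha (add_nonneg (hE x) (hE _))
  calc (1:ℝ) = Real.exp 0 := Real.exp_zero.symm
    _ ≤ _ := Real.exp_le_exp.mpr this

/-- The spectral gap inequality. -/
lemma gen_gap (ha : 0 ≤ a) (hE : ∀ x, 0 ≤ E x) (w : (Fin N → Bool) → ℝ)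
    (hw : ∑ x, w x = 0) :
    w ⬝ᵥ (gen N a E *ᵥ w) ≤ -2 * ∑ x, (w x)^2 := by
  rw [gen_quad]
  have h0 : ∑ x, ∑ i, (w x - w (flipv i x))^2
      ≤ ∑ x, ∑ i : Fin N, ome a E x i * (w x - w (flipv i x))^2 := by
    refine Finset.sum_le_sum fun x _ => Finset.sum_le_sum fun i _ => ?_
    nlinarith [one_le_ome a E ha hE x i, sq_nonneg (w x - w (flipv i x))]
  have hp := poincare w
  rw [hw] at hp
  have h2N : (0:ℝ) < 2^N := by positivity
  have hp2 : 4 * ∑ x, (w x)^2 ≤ ∑ x, ∑ i, (w x - w (flipv i x))^2 := by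
    rw [Finset.sum_comm]
    nlinarith
  nlinarith

lemma gen_symm : (gen N a E).IsHermitian := by
  rw [Matrix.IsHermitian]
  ext x y
  simp only [Matrix.conjTranspose_apply, star_trivial]
  rcases eq_or_ne x y with rfl | hxy
  · rfl
  · have hnbr : nbr y x ↔ nbr x y := by
      unfold nbr
      constructor <;> intro h <;> (rw [← h]; congr 1; ext i; simp [ne_comm])
    rw [gen, gen]
    simp only [if_neg hxy, if_neg (Ne.symm hxy)]
    by_cases h : nbr x y
    · rw [if_pos h, if_pos (hnbr.mpr h), add_comm]
    · rw [if_neg h, if_neg (fun hh => h (hnbr.mp hh))]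

lemma gen_mulVec_one : gen N a E *ᵥ (fun _ => (1:ℝ)) = 0 := by
  funext x
  rw [gen_mulVec]
  simp


lemma conj_diag_entry (U : Matrix (Fin N → Bool) (Fin N → Bool) ℝ)
    (c : (Fin N → Bool) → ℝ) (x y : Fin N → Bool) :
    (U * Matrix.diagonal c * star U) x y = ∑ i, c i * (U x i * U y i) := by
  rw [Matrix.mul_apply]
  congr 1; funext i
  rw [Matrix.mul_diagonal, Matrix.star_eq_conjTranspose, Matrix.conjTranspose_apply,
    star_trivial]
  ring

lemma card_V : (Fintype.card (Fin N → Bool) : ℝ) = 2^N := by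
  simp [Fintype.card_fun]

end HCproof

set_option maxHeartbeats 2000000 in
open Matrix HCproof in
/-- Uniform decay of the heat kernel towards the uniform measure. -/
theorem stmt2 (N : ℕ) (hN : 1 ≤ N) (a : ℝ) (ha : 0 ≤ a)
    (E : (Fin N → Bool) → ℝ) (hE : ∀ x, 0 ≤ E x)
    (x y : Fin N → Bool) (t : ℝ) (ht : 0 ≤ t) :
    |(NormedSpace.exp (t • gen N a E)) x y - 1 / 2 ^ N| ≤ Real.exp (-2 * t) := by
  classical
  have hL : (gen N a E).IsHermitian := gen_symm a E
  set μ : (Fin N → Bool) → ℝ := hL.eigenvalues with hμdef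
  set U : Matrix (Fin N → Bool) (Fin N → Bool) ℝ :=
    (hL.eigenvectorUnitary : Matrix (Fin N → Bool) (Fin N → Bool) ℝ) with hUdef
  set u : (Fin N → Bool) → (Fin N → Bool) → ℝ :=
    (fun i => ⇑(hL.eigenvectorBasis i)) with hudef
  have hu : ∀ (i x : Fin N → Bool), U x i = u i x := fun i x =>
    hL.eigenvectorUnitary_apply x i
  have hUU : U * star U = 1 :=
    Matrix.mem_unitaryGroup_iff.mp hL.eigenvectorUnitary.2
  have h2Npos : (0:ℝ) < 2^N := by positivity
  have hcard : (Fintype.card (Fin N → Bool) : ℝ) = 2^N := card_V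
  -- orthonormality
  have h_orth : ∀ i j, ∑ z, u i z * u j z = if i = j then (1:ℝ) else 0 := by
    intro i j
    have horm := hL.eigenvectorBasis.orthonormal
    rw [orthonormal_iff_ite] at horm
    have h2 := horm i j
    simpa [PiLp.inner_apply, RCLike.inner_apply, mul_comm] using h2
  -- eigen equation
  have h_eig : ∀ i, gen N a E *ᵥ u i = μ i • u i := fun i =>
    hL.mulVec_eigenvectorBasis i
  -- column sums of gen vanish
  have h_colsum : ∀ z, ∑ w, gen N a E w z = 0 := by
    intro z
    have hsymE : ∀ p q, gen N a E p q = gen N a E q p := by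
      intro p q
      have := congrFun (congrFun hL p) q
      rw [Matrix.conjTranspose_apply, star_trivial] at this
      exact this.symm
    have h1 := congrFun (gen_mulVec_one a E) z
    rw [Matrix.mulVec, dotProduct] at h1
    simp only [mul_one] at h1
    rw [show (∑ w, gen N a E w z) = ∑ w, gen N a E z w from
      Finset.sum_congr rfl fun w _ => hsymE w z]
    exact h1
  -- eigenvectors with nonzero eigenvalue have zero sum
  have h_szero : ∀ i, μ i ≠ 0 → ∑ z, u i z = 0 := by
    intro i hi
    have h1 : ∑ z, (gen N a E *ᵥ u i) z = μ i * ∑ z, u i z := by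
      rw [h_eig i, Finset.mul_sum]
      rfl
    have h2 : ∑ z, (gen N a E *ᵥ u i) z = 0 := by
      have : ∀ z, (gen N a E *ᵥ u i) z = ∑ w, gen N a E z w * u i w := fun z => rfl
      simp_rw [this]
      rw [Finset.sum_comm]
      have : ∀ w, ∑ z, gen N a E z w * u i w = (∑ z, gen N a E z w) * u i w := by
        intro w; rw [Finset.sum_mul]
      simp_rw [this, h_colsum, zero_mul, Finset.sum_const_zero]
    have := h1.symm.trans h2
    exact (mul_eq_zero.mp this).resolve_left hi
  -- eigenvalue dichotomy
  have h_mu : ∀ i, μ i = 0 ∨ μ i ≤ -2 := by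
    intro i
    by_cases h0 : μ i = 0
    · exact Or.inl h0
    · right
      have hg := gen_gap a E ha hE (u i) (h_szero i h0)
      have hnorm : ∑ z, (u i z)^2 = 1 := by
        have h11 : ∑ z, u i z * u i z = 1 := by simpa using h_orth i i
        rw [← h11]; congr 1; funext z; ring
      have hdp : u i ⬝ᵥ (gen N a E *ᵥ u i) = μ i := by
        rw [h_eig i, dotProduct]
        have : ∀ z, u i z * (μ i • u i) z = μ i * (u i z)^2 := by
          intro z; simp [Pi.smul_apply, smul_eq_mul]; ring
        simp_rw [this, ← Finset.mul_sum, hnorm, mul_one]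
      rw [hdp, hnorm, mul_one] at hg
      exact hg
  -- zero eigenvectors are constant
  have h_const : ∀ i, μ i = 0 → ∃ c : ℝ, (∀ z, u i z = c) ∧ (2:ℝ)^N * c^2 = 1 := by
    intro i h0
    set c : ℝ := (∑ z, u i z) / 2^N with hc
    set w : (Fin N → Bool) → ℝ := fun z => u i z - c with hwdef
    have hwsum : ∑ z, w z = 0 := by
      rw [hwdef]
      rw [Finset.sum_sub_distrib, Finset.sum_const, Finset.card_univ, nsmul_eq_mul, hcard, hc]
      field_simp
      ring
    have hweq : w = (fun z => u i z) - c • (fun _ => (1:ℝ)) := by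
      funext z; simp [hwdef]
    have hLw : gen N a E *ᵥ w = 0 := by
      rw [hweq, Matrix.mulVec_sub, Matrix.mulVec_smul, gen_mulVec_one, h_eig i, h0]
      simp
    have hgap := gen_gap a E ha hE w hwsum
    rw [hLw, dotProduct_zero] at hgap
    have hsq : ∑ z, (w z)^2 ≤ 0 := by linarith
    have hwz : ∀ z, w z = 0 := by
      intro z
      have hnn : ∀ z' ∈ Finset.univ, (0:ℝ) ≤ (w z')^2 := fun z' _ => sq_nonneg _
      have h2 := (Finset.sum_eq_zero_iff_of_nonneg hnn).mp
        (le_antisymm hsq (Finset.sum_nonneg hnn))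
      have h3 := h2 z (Finset.mem_univ z)
      exact pow_eq_zero_iff (by norm_num) |>.mp h3
    have hcz : ∀ z, u i z = c := fun z =>
      sub_eq_zero.mp (by simpa [hwdef] using hwz z)
    refine ⟨c, hcz, ?_⟩
    have hnorm : ∑ z, (u i z)^2 = 1 := by
      have h11 : ∑ z, u i z * u i z = 1 := by simpa using h_orth i i
      rw [← h11]; congr 1; funext z; ring
    have hcc : ∀ z : Fin N → Bool, (u i z)^2 = c^2 := fun z => by rw [hcz z]
    rw [Finset.sum_congr rfl (fun z _ => hcc z), Finset.sum_const, Finset.card_univ,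
      nsmul_eq_mul, hcard] at hnorm
    exact hnorm
  -- spectral theorem
  have hspec : gen N a E = U * Matrix.diagonal μ * star U := by
    have h := hL.spectral_theorem
    have h2 : RCLike.ofReal ∘ hL.eigenvalues = hL.eigenvalues := by
      funext i; simp [RCLike.ofReal_real_eq_id]
    rw [h2] at h
    exact h
  have hUinv : U⁻¹ = star U := Matrix.inv_eq_right_inv hUU
  have hsUU : star U * U = 1 := Matrix.mem_unitaryGroup_iff'.mp hL.eigenvectorUnitary.2
  have hUnit : IsUnit U := ⟨⟨U, star U, hUU, hsUU⟩, rfl⟩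
  -- exponential formula
  have key1 : NormedSpace.exp (t • gen N a E)
      = U * Matrix.diagonal (fun i => Real.exp (t * μ i)) * star U := by
    have hsm : t • gen N a E = U * Matrix.diagonal (fun i => t * μ i) * star U := by
      rw [hspec]
      rw [show t • (U * Matrix.diagonal μ * star U)
          = U * (t • Matrix.diagonal μ) * star U by
        rw [mul_smul_comm, smul_mul_assoc]]
      congr 1
      rw [← Matrix.diagonal_smul]
      rfl
    rw [hsm, ← hUinv, Matrix.exp_conj U _ hUnit, Matrix.exp_diagonal, hUinv]
    congr 2
    funext i
    rw [Pi.exp_def]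
    rw [← Real.exp_eq_exp_ℝ]
  -- the projection matrix
  set P : Matrix (Fin N → Bool) (Fin N → Bool) ℝ :=
    Matrix.of (fun _ _ => ((2:ℝ)^N)⁻¹) with hPdef
  set d : (Fin N → Bool) → ℝ := (fun i => if μ i = 0 then (1:ℝ) else 0) with hddef
  have hD : star U * P * U = Matrix.diagonal d := by
    ext i j
    have hentry : (star U * P * U) i j
        = ((2:ℝ)^N)⁻¹ * ((∑ z, u i z) * (∑ z, u j z)) := by
      rw [Matrix.mul_apply]
      have hrow : ∀ z, (star U * P) i z = ((2:ℝ)^N)⁻¹ * ∑ w, u i w := by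
        intro z
        rw [Matrix.mul_apply]
        have : ∀ w : Fin N → Bool, (star U) i w * P w z = u i w * ((2:ℝ)^N)⁻¹ := by
          intro w
          rw [Matrix.star_eq_conjTranspose, Matrix.conjTranspose_apply, star_trivial, hu]
          rfl
        simp_rw [this]
        rw [← Finset.sum_mul, mul_comm]
      simp_rw [hrow]
      rw [← Finset.mul_sum, mul_assoc]
      have huj : ∑ z, U z j = ∑ z, u j z := Finset.sum_congr rfl fun z _ => hu j z
      rw [huj]
    rw [hentry]
    rcases eq_or_ne i j with rfl | hij
    · rw [Matrix.diagonal_apply_eq]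
      rcases h_mu i with h0 | h2
      · obtain ⟨c, hc, hcsq⟩ := h_const i h0
        rw [hddef]
        simp only [h0, ↓reduceIte]
        have hs : ∑ z, u i z = (2:ℝ)^N * c := by
          rw [Finset.sum_congr rfl (fun z _ => hc z), Finset.sum_const,
            Finset.card_univ, nsmul_eq_mul, hcard]
        rw [hs]
        field_simp
        nlinarith [hcsq]
      · have hs := h_szero i (by intro h; rw [h] at h2; norm_num at h2)
        rw [hs, hddef]
        have : μ i ≠ 0 := by intro h; rw [h] at h2; norm_num at h2
        simp [this]
    · rw [Matrix.diagonal_apply_ne _ hij]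
      rcases h_mu i with h0i | h2i
      · rcases h_mu j with h0j | h2j
        · -- both zero: impossible that inner product vanishes unless excluded
          obtain ⟨ci, hci, hcisq⟩ := h_const i h0i
          obtain ⟨cj, hcj, hcjsq⟩ := h_const j h0j
          have horth := h_orth i j
          rw [if_neg hij] at horth
          have h1 : ∑ z, u i z * u j z = (2:ℝ)^N * (ci * cj) := by
            rw [Finset.sum_congr rfl (fun z _ => by rw [hci z, hcj z]),
              Finset.sum_const, Finset.card_univ, nsmul_eq_mul, hcard]
          have hsi : ∑ z, u i z = (2:ℝ)^N * ci := by
            rw [Finset.sum_congr rfl (fun z _ => hci z), Finset.sum_const,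
              Finset.card_univ, nsmul_eq_mul, hcard]
          have hsj : ∑ z, u j z = (2:ℝ)^N * cj := by
            rw [Finset.sum_congr rfl (fun z _ => hcj z), Finset.sum_const,
              Finset.card_univ, nsmul_eq_mul, hcard]
          rw [hsi, hsj]
          rw [h1] at horth
          have : ci * cj = 0 := by
            have := horth
            nlinarith
          nlinarith [this]
        · have hs := h_szero j (by intro h; rw [h] at h2j; norm_num at h2j)
          rw [hs]; ring
      · have hs := h_szero i (by intro h; rw [h] at h2i; norm_num at h2i)
        rw [hs]; ring
  have hP : P = U * Matrix.diagonal d * star U := by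
    calc P = 1 * P * 1 := by rw [one_mul, mul_one]
      _ = (U * star U) * P * (U * star U) := by rw [hUU]
      _ = U * (star U * P * U) * star U := by
          simp only [Matrix.mul_assoc]
      _ = U * Matrix.diagonal d * star U := by rw [hD]
  -- entry of P
  have hPxy : (1:ℝ) / 2^N = P x y := by
    rw [hPdef]
    simp [one_div]
  -- row normalisation
  have hrow1 : ∀ z, ∑ i, (U z i)^2 = 1 := by
    intro z
    have h1 := congrFun (congrFun hUU z) z
    rw [Matrix.mul_apply] at h1
    have h2 : ∀ i, U z i * (star U) i z = (U z i)^2 := by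
      intro i
      rw [Matrix.star_eq_conjTranspose, Matrix.conjTranspose_apply, star_trivial]
      ring
    simp_rw [h2] at h1
    rw [h1, Matrix.one_apply_eq]
  -- coefficient bound
  have hcoef : ∀ i, |Real.exp (t * μ i) - d i| ≤ Real.exp (-2 * t) := by
    intro i
    rcases h_mu i with h0 | h2
    · have hz : Real.exp (t * μ i) - d i = 0 := by
        rw [hddef]; simp [h0]
      rw [hz, abs_zero]
      positivity
    · have hne : μ i ≠ 0 := by intro h; rw [h] at h2; norm_num at h2
      rw [hddef]
      simp only [if_neg hne, sub_zero, abs_of_pos (Real.exp_pos _)]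
      apply Real.exp_le_exp.mpr
      calc t * μ i ≤ t * (-2) := mul_le_mul_of_nonneg_left h2 ht
        _ = -2 * t := by ring
  -- final computation
  rw [key1, hPxy, hP, conj_diag_entry, conj_diag_entry, ← Finset.sum_sub_distrib]
  have hstep : ∀ i : Fin N → Bool,
      Real.exp (t * μ i) * (U x i * U y i) - d i * (U x i * U y i)
        = (Real.exp (t * μ i) - d i) * (U x i * U y i) := fun i => by ring
  rw [Finset.sum_congr rfl (fun i _ => hstep i)]
  calc |∑ i, (Real.exp (t * μ i) - d i) * (U x i * U y i)|
      ≤ ∑ i, |(Real.exp (t * μ i) - d i) * (U x i * U y i)| :=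
        Finset.abs_sum_le_sum_abs _ _
    _ ≤ ∑ i, Real.exp (-2*t) * (|U x i| * |U y i|) := by
        refine Finset.sum_le_sum fun i _ => ?_
        rw [abs_mul, abs_mul]
        exact mul_le_mul_of_nonneg_right (hcoef i)
          (mul_nonneg (abs_nonneg _) (abs_nonneg _))
    _ = Real.exp (-2*t) * ∑ i, |U x i| * |U y i| := by rw [Finset.mul_sum]
    _ ≤ Real.exp (-2*t) * 1 := by
        refine mul_le_mul_of_nonneg_left ?_ (le_of_lt (Real.exp_pos _))
        have hcs := Finset.sum_mul_sq_le_sq_mul_sq Finset.univ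
          (fun i => |U x i|) (fun i => |U y i|)
        have hx2 : ∑ i, |U x i|^2 = 1 := by
          rw [← hrow1 x]; congr 1; funext i; rw [sq_abs]
        have hy2 : ∑ i, |U y i|^2 = 1 := by
          rw [← hrow1 y]; congr 1; funext i; rw [sq_abs]
        rw [hx2, hy2, mul_one] at hcs
        have hnn : (0:ℝ) ≤ ∑ i, |U x i| * |U y i| :=
          Finset.sum_nonneg fun i _ => mul_nonneg (abs_nonneg _) (abs_nonneg _)
        nlinarith
    _ = Real.exp (-2*t) := mul_one _
end

section
/- Fix a constant ā > 0. For each N ≥ 2 let a_N be a real number with 0 ≤ a_N ≤ ā√(2 log N), let (E_x)_{x∈V_N} be i.i.d. random variables with law N_+(0,1) under P, and set ω̄_N = max_{x∈V_N} e^{a_N E_x} Σ_{z∼x} e^{a_N E_z}. Then for all N sufficiently large, P[ log ω̄_N > N^{3/4} ] ≤ e^{−N^{5/4}}. -/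
open MeasureTheory ProbabilityTheory Filter

/-- The law `N_+(0,1)` of `max(Z,0)` for `Z` standard Gaussian. -/
noncomputable def halfGaussian : Measure ℝ :=
  (gaussianReal 0 1).map (fun z => max z 0)

instance : IsProbabilityMeasure halfGaussian :=
  Measure.isProbabilityMeasure_map (by measurability)

/-- The joint law `P` of the i.i.d. family `(E_x)_{x ∈ V_N}` with marginal `N_+(0,1)`. -/
noncomputable def Pmeas (N : ℕ) : Measure ((Fin N → Bool) → ℝ) :=
  Measure.pi fun _ => halfGaussian

/-- The maximal total jump rate `ω̄_N = max_x e^{a_N E_x} ∑_{z ∼ x} e^{a_N E_z}`. -/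
noncomputable def omegaBar (N : ℕ) (aN : ℝ) (E : (Fin N → Bool) → ℝ) : ℝ :=
  ⨆ x : Fin N → Bool, Real.exp (aN * E x) * ∑ z, if nbr x z then Real.exp (aN * E z) else 0

/-! ### Auxiliary lemmas -/

/-- Each vertex of the hypercube has at most `N` neighbours. -/
lemma nbr_card_le {N : ℕ} (x : Fin N → Bool) :
    (Finset.univ.filter fun z => nbr x z).card ≤ N := by
  classical
  have h : (Finset.univ.filter fun z => nbr x z) ⊆
      Finset.univ.image (fun i : Fin N => Function.update x i (!x i)) := by
    intro z hz
    simp only [Finset.mem_filter] at hz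
    obtain ⟨i, hi⟩ := Finset.card_eq_one.mp hz.2
    refine Finset.mem_image.mpr ⟨i, Finset.mem_univ _, ?_⟩
    funext j
    by_cases hj : j = i
    · subst hj
      have hmem : j ∈ Finset.univ.filter fun k => x k ≠ z k := by
        rw [hi]; exact Finset.mem_singleton_self j
      simp only [Finset.mem_filter] at hmem
      rw [Function.update_self]
      have := hmem.2
      revert this; cases x j <;> cases z j <;> simp
    · have hnm : j ∉ Finset.univ.filter fun k => x k ≠ z k := by
        rw [hi]; simp [hj]
      simp only [Finset.mem_filter, Finset.mem_univ, true_and, not_not] at hnm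
      rw [Function.update_of_ne hj, hnm]
  calc (Finset.univ.filter fun z => nbr x z).card
      ≤ (Finset.univ.image (fun i : Fin N => Function.update x i (!x i))).card :=
        Finset.card_le_card h
    _ ≤ (Finset.univ : Finset (Fin N)).card := Finset.card_image_le
    _ = N := by simp

/-- Gaussian tail bound via a tilting argument. -/
lemma halfGaussian_tail (t : ℝ) (ht : 0 ≤ t) :
    halfGaussian (Set.Ioi t) ≤ ENNReal.ofReal (Real.exp (-(t^2)/2)) := by
  rw [halfGaussian, Measure.map_apply (by measurability) measurableSet_Ioi]
  have hpre : (fun z : ℝ => max z 0) ⁻¹' Set.Ioi t = Set.Ioi t := by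
    ext z
    simp only [Set.mem_preimage, Set.mem_Ioi, lt_max_iff]
    constructor
    · rintro (h | h)
      · exact h
      · linarith
    · exact Or.inl
  rw [hpre, gaussianReal_apply 0 one_ne_zero]
  have hpt : ∀ z ∈ Set.Ioi t,
      gaussianPDF 0 1 z ≤ ENNReal.ofReal (Real.exp (-(t^2)/2)) * gaussianPDF t 1 z := by
    intro z hz
    simp only [Set.mem_Ioi] at hz
    rw [gaussianPDF, gaussianPDF, ← ENNReal.ofReal_mul (Real.exp_nonneg _)]
    apply ENNReal.ofReal_le_ofReal
    rw [gaussianPDFReal, gaussianPDFReal, mul_left_comm]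
    apply mul_le_mul_of_nonneg_left _ (inv_nonneg.mpr (Real.sqrt_nonneg _))
    rw [← Real.exp_add]
    apply Real.exp_le_exp.mpr
    push_cast
    nlinarith [hz, ht]
  calc ∫⁻ z in Set.Ioi t, gaussianPDF 0 1 z
      ≤ ∫⁻ z in Set.Ioi t, ENNReal.ofReal (Real.exp (-(t^2)/2)) * gaussianPDF t 1 z :=
        setLIntegral_mono (measurable_const.mul (measurable_gaussianPDF _ _)) hpt
    _ ≤ ∫⁻ z, ENNReal.ofReal (Real.exp (-(t^2)/2)) * gaussianPDF t 1 z :=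
        setLIntegral_le_lintegral _ _
    _ = ENNReal.ofReal (Real.exp (-(t^2)/2)) * ∫⁻ z, gaussianPDF t 1 z :=
        lintegral_const_mul _ (measurable_gaussianPDF _ _)
    _ = ENNReal.ofReal (Real.exp (-(t^2)/2)) := by
        rw [lintegral_gaussianPDF_eq_one t one_ne_zero, mul_one]

/-- The marginal of `Pmeas N` at a vertex `x` is `halfGaussian`. -/
lemma Pmeas_marginal {N : ℕ} (t : ℝ) (x : Fin N → Bool) :
    Pmeas N {E | t < E x} = halfGaussian (Set.Ioi t) := by
  classical
  have hset : {E : (Fin N → Bool) → ℝ | t < E x} =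
      Set.pi Set.univ (fun y => if y = x then Set.Ioi t else Set.univ) := by
    ext E
    simp only [Set.mem_setOf_eq, Set.mem_pi, Set.mem_univ, forall_true_left]
    constructor
    · intro h y
      by_cases hy : y = x
      · subst hy; simp [h]
      · simp [hy]
    · intro h
      have := h x
      simpa using this
  rw [hset, Pmeas, Measure.pi_pi]
  have : ∀ y : Fin N → Bool,
      halfGaussian (if y = x then Set.Ioi t else Set.univ) =
      if y = x then halfGaussian (Set.Ioi t) else 1 := by
    intro y; split <;> simp
  simp_rw [this]
  rw [Finset.prod_ite_eq' Finset.univ x (fun _ => halfGaussian (Set.Ioi t))]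
  simp

/-- Deterministic bound on `omegaBar` when all the `E x` are bounded by `t`. -/
lemma omegaBar_le {N : ℕ} {aN t : ℝ} (haN : 0 ≤ aN) {E : (Fin N → Bool) → ℝ}
    (hE : ∀ x, E x ≤ t) :
    omegaBar N aN E ≤ (N : ℝ) * (Real.exp (aN * t) * Real.exp (aN * t)) := by
  classical
  apply ciSup_le
  intro x
  have h1 : Real.exp (aN * E x) ≤ Real.exp (aN * t) :=
    Real.exp_le_exp.mpr (mul_le_mul_of_nonneg_left (hE x) haN)
  have h2 : (∑ z, if nbr x z then Real.exp (aN * E z) else 0)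
      ≤ (N : ℝ) * Real.exp (aN * t) := by
    calc (∑ z, if nbr x z then Real.exp (aN * E z) else 0)
        ≤ ∑ z, (if nbr x z then Real.exp (aN * t) else 0) := by
          apply Finset.sum_le_sum
          intro z _
          by_cases h : nbr x z
          · simp only [h, if_true]
            exact Real.exp_le_exp.mpr (mul_le_mul_of_nonneg_left (hE z) haN)
          · simp [h]
      _ = ∑ z ∈ Finset.univ.filter fun z => nbr x z, Real.exp (aN * t) :=
          (Finset.sum_filter _ _).symm
      _ = ((Finset.univ.filter fun z => nbr x z).card : ℝ) * Real.exp (aN * t) := by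
          rw [Finset.sum_const, nsmul_eq_mul]
      _ ≤ (N : ℝ) * Real.exp (aN * t) := by
          apply mul_le_mul_of_nonneg_right _ (Real.exp_nonneg _)
          exact_mod_cast nbr_card_le x
  have hsum_nonneg : (0:ℝ) ≤ ∑ z, if nbr x z then Real.exp (aN * E z) else 0 := by
    apply Finset.sum_nonneg
    intro z _
    split
    · exact Real.exp_nonneg _
    · exact le_refl 0
  calc Real.exp (aN * E x) * (∑ z, if nbr x z then Real.exp (aN * E z) else 0)
      ≤ Real.exp (aN * t) * ((N : ℝ) * Real.exp (aN * t)) :=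
        mul_le_mul h1 h2 hsum_nonneg (Real.exp_nonneg _)
    _ = (N : ℝ) * (Real.exp (aN * t) * Real.exp (aN * t)) := by ring

lemma omegaBar_nonneg {N : ℕ} (aN : ℝ) (E : (Fin N → Bool) → ℝ) :
    0 ≤ omegaBar N aN E := by
  classical
  have hbdd : BddAbove (Set.range fun x : Fin N → Bool =>
      Real.exp (aN * E x) * ∑ z, if nbr x z then Real.exp (aN * E z) else 0) :=
    (Set.finite_range _).bddAbove
  refine le_trans ?_ (le_ciSup hbdd (Classical.arbitrary _))
  apply mul_nonneg (Real.exp_nonneg _)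
  apply Finset.sum_nonneg
  intro z _
  split
  · exact Real.exp_nonneg _
  · exact le_refl 0

set_option maxHeartbeats 2000000 in
/-- A super-exponential bound on the probability that `log ω̄_N` exceeds `N^{3/4}`. -/
theorem stmt8 (abar : ℝ) (habar : 0 < abar) (a : ℕ → ℝ)
    (ha : ∀ N, 2 ≤ N → 0 ≤ a N ∧ a N ≤ abar * Real.sqrt (2 * Real.log N)) :
    ∀ᶠ N : ℕ in atTop,
      Pmeas N {E | (N : ℝ) ^ ((3 : ℝ) / 4) < Real.log (omegaBar N (a N) E)} ≤
        ENNReal.ofReal (Real.exp (-(N : ℝ) ^ ((5 : ℝ) / 4))) := by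
  classical
  set c : ℝ := 1 + abar with hcdef
  have hc : (0:ℝ) < c := by simp only [hcdef]; linarith
  -- eventual facts over ℝ
  have F1 : ∀ᶠ x : ℝ in atTop, Real.sqrt (2 * Real.log x) ≤ x ^ ((1:ℝ)/16) := by
    have h := Asymptotics.isLittleO_iff.mp
      (isLittleO_log_rpow_atTop (by norm_num : (0:ℝ) < 1/8))
      (by norm_num : (0:ℝ) < 1/2)
    filter_upwards [h, eventually_ge_atTop (1:ℝ)] with x hx hx1
    have hlog : 0 ≤ Real.log x := Real.log_nonneg hx1
    have hx0 : (0:ℝ) ≤ x := by linarith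
    have hr : 0 ≤ x ^ ((1:ℝ)/8) := Real.rpow_nonneg hx0 _
    rw [Real.norm_eq_abs, Real.norm_eq_abs, abs_of_nonneg hlog, abs_of_nonneg hr] at hx
    have h2 : 2 * Real.log x ≤ x ^ ((1:ℝ)/8) := by linarith
    calc Real.sqrt (2 * Real.log x) ≤ Real.sqrt (x ^ ((1:ℝ)/8)) := Real.sqrt_le_sqrt h2
      _ = x ^ ((1:ℝ)/16) := by
          rw [Real.sqrt_eq_rpow, ← Real.rpow_mul hx0]
          norm_num
  have F2 : ∀ᶠ x : ℝ in atTop, c * Real.log x ≤ x ^ ((11:ℝ)/16) := by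
    have h := Asymptotics.isLittleO_iff.mp
      (isLittleO_log_rpow_atTop (by norm_num : (0:ℝ) < 11/16))
      (inv_pos.mpr hc)
    filter_upwards [h, eventually_ge_atTop (1:ℝ)] with x hx hx1
    have hlog : 0 ≤ Real.log x := Real.log_nonneg hx1
    have hx0 : (0:ℝ) ≤ x := by linarith
    have hr : 0 ≤ x ^ ((11:ℝ)/16) := Real.rpow_nonneg hx0 _
    rw [Real.norm_eq_abs, Real.norm_eq_abs, abs_of_nonneg hlog, abs_of_nonneg hr] at hx
    calc c * Real.log x ≤ c * (c⁻¹ * x ^ ((11:ℝ)/16)) :=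
          mul_le_mul_of_nonneg_left hx hc.le
      _ = x ^ ((11:ℝ)/16) := by field_simp
  have F3 : ∀ᶠ x : ℝ in atTop, 16 * c^2 ≤ x ^ ((1:ℝ)/8) :=
    (tendsto_rpow_atTop (by norm_num : (0:ℝ) < 1/8)).eventually_ge_atTop (16 * c^2)
  filter_upwards [tendsto_natCast_atTop_atTop.eventually F1,
    tendsto_natCast_atTop_atTop.eventually F2,
    tendsto_natCast_atTop_atTop.eventually F3,
    eventually_ge_atTop 2] with N h1 h2 h3 hN2
  set x : ℝ := (N : ℝ) with hxdef
  have hx1 : (1:ℝ) ≤ x := by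
    simp only [hxdef]; exact_mod_cast Nat.one_le_of_lt hN2
  have hx0 : (0:ℝ) < x := by linarith
  obtain ⟨ha0, ha1⟩ := ha N hN2
  set t : ℝ := x ^ ((11:ℝ)/16) / (2 * c) with htdef
  have ht0 : 0 ≤ t := by positivity
  have hat : a N ≤ abar * x ^ ((1:ℝ)/16) :=
    ha1.trans (mul_le_mul_of_nonneg_left h1 habar.le)
  have hadd : x ^ ((1:ℝ)/16) * x ^ ((11:ℝ)/16) = x ^ ((3:ℝ)/4) := by
    rw [← Real.rpow_add hx0]; norm_num
  have h2at : 2 * a N * t ≤ abar / c * x ^ ((3:ℝ)/4) := by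
    have heq : 2 * (abar * x ^ ((1:ℝ)/16)) * t = abar / c * x ^ ((3:ℝ)/4) := by
      rw [htdef, ← hadd]; field_simp
    calc 2 * a N * t ≤ 2 * (abar * x ^ ((1:ℝ)/16)) * t := by
          apply mul_le_mul_of_nonneg_right _ ht0
          linarith
      _ = abar / c * x ^ ((3:ℝ)/4) := heq
  have h1116 : x ^ ((11:ℝ)/16) ≤ x ^ ((3:ℝ)/4) :=
    Real.rpow_le_rpow_of_exponent_le hx1 (by norm_num)
  have hdet : Real.log x + 2 * a N * t ≤ x ^ ((3:ℝ)/4) := by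
    have hclog : c * Real.log x ≤ x ^ ((3:ℝ)/4) := h2.trans h1116
    have habc : abar / c * c = abar := by field_simp
    nlinarith [Real.log_nonneg hx1, Real.rpow_nonneg hx0.le ((3:ℝ)/4)]
  -- event inclusion
  have hincl : {E : (Fin N → Bool) → ℝ | x ^ ((3:ℝ)/4) < Real.log (omegaBar N (a N) E)} ⊆
      ⋃ y : Fin N → Bool, {E : (Fin N → Bool) → ℝ | t < E y} := by
    intro E hE
    simp only [Set.mem_setOf_eq] at hE
    by_contra hnot
    simp only [Set.mem_iUnion, Set.mem_setOf_eq, not_exists, not_lt] at hnot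
    have hb := omegaBar_le ha0 hnot
    have hB1 : (1:ℝ) ≤ (N : ℝ) * (Real.exp (a N * t) * Real.exp (a N * t)) := by
      have he1 : (1:ℝ) ≤ Real.exp (a N * t) := Real.one_le_exp (mul_nonneg ha0 ht0)
      nlinarith [hx1]
    have hlogle : Real.log (omegaBar N (a N) E) ≤
        Real.log ((N : ℝ) * (Real.exp (a N * t) * Real.exp (a N * t))) := by
      rcases lt_or_eq_of_le (omegaBar_nonneg (a N) E) with hpos | hzero
      · exact Real.log_le_log hpos hb
      · rw [← hzero, Real.log_zero]
        exact Real.log_nonneg hB1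
    rw [Real.log_mul (by positivity) (by positivity), ← Real.exp_add, Real.log_exp] at hlogle
    have hfin : Real.log ((N:ℝ)) + (a N * t + a N * t) ≤ x ^ ((3:ℝ)/4) := by
      have : a N * t + a N * t = 2 * a N * t := by ring
      rw [this]
      exact hdet
    exact absurd (lt_of_lt_of_le hE (hlogle.trans hfin)) (lt_irrefl _)
  -- probability estimate
  have hsq : (x ^ ((11:ℝ)/16))^2 = x ^ ((11:ℝ)/8) := by
    rw [← Real.rpow_natCast (x ^ ((11:ℝ)/16)) 2, ← Real.rpow_mul hx0.le]
    norm_num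
  have hsplit : x ^ ((11:ℝ)/8) = x ^ ((5:ℝ)/4) * x ^ ((1:ℝ)/8) := by
    rw [← Real.rpow_add hx0]; norm_num
  have ht2 : t^2 / 2 = x ^ ((5:ℝ)/4) * x ^ ((1:ℝ)/8) / (8 * c^2) := by
    rw [htdef, div_pow, ← hsplit, ← hsq]
    field_simp
    ring
  have hx54 : x ≤ x ^ ((5:ℝ)/4) := by
    calc x = x ^ (1:ℝ) := (Real.rpow_one x).symm
      _ ≤ x ^ ((5:ℝ)/4) := Real.rpow_le_rpow_of_exponent_le hx1 (by norm_num)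
  have hlog2 : Real.log 2 ≤ 1 := by
    have := Real.log_two_lt_d9
    linarith
  have hprob : x * Real.log 2 + x ^ ((5:ℝ)/4) ≤ t^2 / 2 := by
    rw [ht2, le_div_iff₀ (by positivity)]
    have hxlog2 : x * Real.log 2 ≤ x ^ ((5:ℝ)/4) := by
      calc x * Real.log 2 ≤ x * 1 :=
            mul_le_mul_of_nonneg_left hlog2 hx0.le
        _ = x := mul_one x
        _ ≤ x ^ ((5:ℝ)/4) := hx54
    have hB : 0 ≤ x ^ ((5:ℝ)/4) := Real.rpow_nonneg hx0.le _
    have k1 : x ^ ((5:ℝ)/4) * (16*c^2) ≤ x ^ ((5:ℝ)/4) * x ^ ((1:ℝ)/8) :=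
      mul_le_mul_of_nonneg_left h3 hB
    have h4 : 0 ≤ 8*c^2*(x ^ ((5:ℝ)/4) - x*Real.log 2) :=
      mul_nonneg (by positivity) (by linarith)
    nlinarith [k1, h4]
  -- assembling
  calc Pmeas N {E | x ^ ((3:ℝ)/4) < Real.log (omegaBar N (a N) E)}
      ≤ Pmeas N (⋃ y : Fin N → Bool, {E : (Fin N → Bool) → ℝ | t < E y}) :=
        measure_mono hincl
    _ ≤ ∑' y : Fin N → Bool, Pmeas N {E : (Fin N → Bool) → ℝ | t < E y} :=
        measure_iUnion_le _
    _ = ∑' (_y : Fin N → Bool), halfGaussian (Set.Ioi t) := by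
        apply tsum_congr
        intro y
        exact Pmeas_marginal t y
    _ = ((2:ENNReal)^N) * halfGaussian (Set.Ioi t) := by
        rw [tsum_fintype, Finset.sum_const, nsmul_eq_mul]
        congr 1
        simp [Fintype.card_fun]
    _ ≤ ((2:ENNReal)^N) * ENNReal.ofReal (Real.exp (-(t^2)/2)) :=
        mul_le_mul_right (halfGaussian_tail t ht0) _
    _ ≤ ENNReal.ofReal (Real.exp (-x ^ ((5:ℝ)/4))) := by
        have h2N : ((2:ENNReal)^N) = ENNReal.ofReal ((2:ℝ)^N) := by
          rw [ENNReal.ofReal_pow (by norm_num)]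
          norm_num
        rw [h2N, ← ENNReal.ofReal_mul (by positivity)]
        apply ENNReal.ofReal_le_ofReal
        have h2exp : (2:ℝ)^N = Real.exp ((N:ℝ) * Real.log 2) := by
          rw [Real.exp_nat_mul, Real.exp_log (by norm_num : (0:ℝ) < 2)]
        rw [h2exp, ← Real.exp_add]
        apply Real.exp_le_exp.mpr
        have : (N:ℝ) = x := rfl
        rw [this]
        linarith [hprob]
end

section
/- Fix β > 0 and c̄ ∈ (0, log 2), and let (d_N) be a sequence of reals with d_N ≥ 3 and log d_N ~ c̄ N as N → ∞. Define b_N = (2 log d_N)^{1/2} − (log log d_N + log(4π)) / (2 (2 log d_N)^{1/2}), B_N = e^{β √N b_N}, and α = √(2c̄)/β, and assume α < 1. Let E have law N_+(0,1). Then there exist constants C > 0 and δ₀ ∈ (0,1] such that for every δ ∈ (0, δ₀], limsup_{N→∞} (d_N / B_N) · E[ e^{β √N E} · 1{ e^{β √N E} ≤ δ B_N } ] ≤ C δ^{1−α}. -/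
open MeasureTheory ProbabilityTheory Filter

open Real
open scoped ENNReal NNReal Topology

lemma exp_half_log {x : ℝ} (hx : 0 < x) : Real.exp (Real.log x / 2) = Real.sqrt x := by
  rw [show Real.log x / 2 = Real.log x * (1/2) by ring, ← Real.rpow_def_of_pos hx,
    ← Real.sqrt_eq_rpow]

lemma halfG_map (u t : ℝ) :
    ∫ e in Set.Iic t, Real.exp (u * e) ∂halfGaussian
      = ∫ z in (fun z => max z 0) ⁻¹' (Set.Iic t), Real.exp (u * max z 0) ∂(gaussianReal 0 1) :=
  setIntegral_map measurableSet_Iic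
    (Continuous.aestronglyMeasurable (by continuity))
    ((measurable_id.max measurable_const).aemeasurable)

lemma halfG_zero {u t : ℝ} (ht : t < 0) :
    ∫ e in Set.Iic t, Real.exp (u * e) ∂halfGaussian = 0 := by
  rw [halfG_map]
  have : (fun z => max z 0) ⁻¹' (Set.Iic t) = ∅ := by
    ext z
    simp only [Set.mem_preimage, Set.mem_Iic, Set.mem_empty_iff_false, iff_false, not_le]
    exact lt_of_lt_of_le ht (le_max_right _ _)
  rw [this, Measure.restrict_empty, integral_zero_measure]

-- FTC bound : ∫_0^t e^{uz - z²/2} dz ≤ e^{ut - t²/2}/(u - t)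
lemma gauss_seg_bound {u t : ℝ} (ht : 0 ≤ t) (htu : t < u) :
    ∫ z in (0:ℝ)..t, Real.exp (u * z - z ^ 2 / 2)
      ≤ Real.exp (u * t - t ^ 2 / 2) / (u - t) := by
  have hut : 0 < u - t := by linarith
  have hd : ∀ z : ℝ, HasDerivAt (fun z => Real.exp (u * z - z ^ 2 / 2) / (u - t))
      ((u - z) * Real.exp (u * z - z ^ 2 / 2) / (u - t)) z := by
    intro z
    have h1 : HasDerivAt (fun z : ℝ => u * z - z ^ 2 / 2) (u - z) z := by
      have := ((hasDerivAt_id z).const_mul u).sub ((hasDerivAt_pow 2 z).div_const 2)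
      exact this.congr_deriv (by push_cast; ring)
    have := (h1.exp).div_const (u - t)
    simpa [mul_comm] using this
  have hcont : Continuous fun z : ℝ => Real.exp (u * z - z ^ 2 / 2) := by continuity
  have hcont2 : Continuous fun z : ℝ => (u - z) * Real.exp (u * z - z ^ 2 / 2) / (u - t) := by
    continuity
  have hftc : ∫ z in (0:ℝ)..t, (u - z) * Real.exp (u * z - z ^ 2 / 2) / (u - t)
      = Real.exp (u * t - t ^ 2 / 2) / (u - t) - Real.exp (u * 0 - 0 ^ 2 / 2) / (u - t) :=
    intervalIntegral.integral_eq_sub_of_hasDerivAt (fun x _ => hd x)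
      (hcont2.intervalIntegrable _ _)
  have hmono : ∫ z in (0:ℝ)..t, Real.exp (u * z - z ^ 2 / 2)
      ≤ ∫ z in (0:ℝ)..t, (u - z) * Real.exp (u * z - z ^ 2 / 2) / (u - t) := by
    apply intervalIntegral.integral_mono_on ht (hcont.intervalIntegrable _ _)
      (hcont2.intervalIntegrable _ _)
    intro x hx
    simp only [Set.mem_Icc] at hx
    rw [le_div_iff₀ hut]
    nlinarith [Real.exp_pos (u * x - x ^ 2 / 2), hx.2]
  calc ∫ z in (0:ℝ)..t, Real.exp (u * z - z ^ 2 / 2)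
      ≤ Real.exp (u * t - t ^ 2 / 2) / (u - t) - Real.exp (u * 0 - 0 ^ 2 / 2) / (u - t) := by
        rw [← hftc]; exact hmono
    _ ≤ Real.exp (u * t - t ^ 2 / 2) / (u - t) := by
        have : 0 < Real.exp (u * 0 - 0 ^ 2 / 2) / (u - t) := by positivity
        linarith

lemma halfG_bound {u t : ℝ} (hu : 0 < u) (ht : 0 ≤ t) (htu : t < u) :
    ∫ e in Set.Iic t, Real.exp (u * e) ∂halfGaussian
      ≤ 1 + (Real.sqrt (2 * Real.pi))⁻¹ * (Real.exp (u * t - t ^ 2 / 2) / (u - t)) := by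
  rw [halfG_map]
  have hpre : (fun z : ℝ => max z 0) ⁻¹' (Set.Iic t) = Set.Iic t := by
    ext z; simp [max_le_iff, ht]
  rw [hpre]
  have hGc : Continuous (fun z : ℝ => Real.exp (u * max z 0)) := by continuity
  have hint : ∀ s : Set ℝ, MeasurableSet s → s ⊆ Set.Iic t →
      IntegrableOn (fun z => Real.exp (u * max z 0)) s (gaussianReal 0 1) := by
    intro s hs hsub
    apply Integrable.mono' (integrable_const (Real.exp (u * t)))
      hGc.aestronglyMeasurable.restrict
    filter_upwards [ae_restrict_mem hs] with z hz
    rw [Real.norm_eq_abs, abs_of_pos (Real.exp_pos _), Real.exp_le_exp]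
    exact mul_le_mul_of_nonneg_left (max_le (hsub hz) ht) hu.le
  rw [← Set.Iic_union_Ioc_eq_Iic ht,
    setIntegral_union (Set.Iic_disjoint_Ioc le_rfl) measurableSet_Ioc
      (hint _ measurableSet_Iic (Set.Iic_subset_Iic.mpr ht))
      (hint _ measurableSet_Ioc Set.Ioc_subset_Iic_self)]
  have h1 : ∫ z in Set.Iic (0:ℝ), Real.exp (u * max z 0) ∂(gaussianReal 0 1) ≤ 1 := by
    have hco : ∀ z ∈ Set.Iic (0:ℝ), Real.exp (u * max z 0) = 1 := by
      intro z hz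
      rw [max_eq_right hz, mul_zero, Real.exp_zero]
    rw [setIntegral_congr_fun measurableSet_Iic hco, setIntegral_const, smul_eq_mul, mul_one]
    exact ENNReal.toReal_le_of_le_ofReal (by norm_num) (by simpa using prob_le_one)
  have h2 : ∫ z in Set.Ioc (0:ℝ) t, Real.exp (u * max z 0) ∂(gaussianReal 0 1)
      ≤ (Real.sqrt (2 * Real.pi))⁻¹ * (Real.exp (u * t - t ^ 2 / 2) / (u - t)) := by
    rw [setIntegral_congr_fun measurableSet_Ioc
      (fun z hz => by rw [max_eq_left hz.1.le] :
        ∀ z ∈ Set.Ioc (0:ℝ) t, Real.exp (u * max z 0) = Real.exp (u * z))]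
    rw [gaussianReal_of_var_ne_zero _ one_ne_zero]
    have hpdf : gaussianPDF 0 1 = fun x => ((Real.toNNReal (gaussianPDFReal 0 1 x) : ℝ≥0) : ℝ≥0∞) := by
      ext x; rw [gaussianPDF, ENNReal.ofReal]
    rw [hpdf, setIntegral_withDensity_eq_setIntegral_smul
      ((measurable_gaussianPDFReal 0 1).real_toNNReal) _ measurableSet_Ioc]
    have hform : ∀ z : ℝ, Real.toNNReal (gaussianPDFReal 0 1 z) • Real.exp (u * z)
        = (Real.sqrt (2 * Real.pi))⁻¹ * Real.exp (u * z - z ^ 2 / 2) := by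
      intro z
      rw [NNReal.smul_def, Real.coe_toNNReal _ (gaussianPDFReal_pos 0 1 z one_ne_zero).le]
      simp only [gaussianPDFReal, NNReal.coe_one, mul_one, sub_zero]
      rw [smul_eq_mul, mul_assoc, ← Real.exp_add]
      ring_nf
    simp_rw [hform]
    rw [integral_const_mul, ← intervalIntegral.integral_of_le ht]
    exact mul_le_mul_of_nonneg_left (gauss_seg_bound ht htu) (by positivity)
  linarith

/-- The centering sequence `b_N` built from the scale `d_N`. -/
noncomputable def bseq (d : ℕ → ℝ) (N : ℕ) : ℝ :=
  Real.sqrt (2 * Real.log (d N)) -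
    (Real.log (Real.log (d N)) + Real.log (4 * Real.pi)) /
      (2 * Real.sqrt (2 * Real.log (d N)))

/-- The depth scale `B_N = e^{β √N b_N}`. -/
noncomputable def Bseq (β : ℝ) (d : ℕ → ℝ) (N : ℕ) : ℝ :=
  Real.exp (β * Real.sqrt N * bseq d N)

set_option maxHeartbeats 1600000 in
/-- The truncated first moment of the Gibbs weight is `O(δ^{1-α})` on the scale `B_N/d_N`. -/
theorem stmt12 (β cbar : ℝ) (hβ : 0 < β) (hc1 : 0 < cbar) (hc2 : cbar < Real.log 2)
    (d : ℕ → ℝ) (hd3 : ∀ N, 3 ≤ d N)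
    (hd : Tendsto (fun N => Real.log (d N) / (cbar * N)) atTop (nhds 1))
    (hα : Real.sqrt (2 * cbar) / β < 1) :
    ∃ C > (0 : ℝ), ∃ δ₀ ∈ Set.Ioc (0 : ℝ) 1, ∀ δ ∈ Set.Ioc (0 : ℝ) δ₀,
      limsup
        (fun N => d N / Bseq β d N *
          ∫ e in {e : ℝ | Real.exp (β * Real.sqrt N * e) ≤ δ * Bseq β d N},
            Real.exp (β * Real.sqrt N * e) ∂halfGaussian)
        atTop ≤ C * δ ^ (1 - Real.sqrt (2 * cbar) / β) := by
  have hα' : Real.sqrt (2 * cbar) < β := by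
    have := (div_lt_one hβ).mp hα; linarith
  have hα0 : 0 < Real.sqrt (2 * cbar) := Real.sqrt_pos.mpr (by linarith)
  have hsq2c : Real.sqrt (2 * cbar) ^ 2 = 2 * cbar := Real.sq_sqrt (by linarith)
  set m : ℝ := (β + Real.sqrt (2 * cbar)) / 2 with hm
  have hm1 : Real.sqrt (2 * cbar) < m := by rw [hm]; linarith
  have hm2 : m < β := by rw [hm]; linarith
  have hm0 : 0 < m := lt_trans hα0 hm1
  have hβm : 0 < β - m := by linarith
  set L : ℕ → ℝ := fun N => Real.log (d N) with hLdef
  have hd0 : ∀ N, 0 < d N := fun N => lt_of_lt_of_le (by norm_num) (hd3 N)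
  have hL1 : ∀ N, 1 < L N := by
    intro N
    calc (1:ℝ) < Real.log 3 := by
          rw [Real.lt_log_iff_exp_lt (by norm_num)]
          exact lt_of_lt_of_le Real.exp_one_lt_d9 (by norm_num)
      _ ≤ L N := (Real.log_le_log_iff (by norm_num) (hd0 N)).mpr (hd3 N)
  have hB0 : ∀ N, 0 < Bseq β d N := fun N => Real.exp_pos _
  set q : ℕ → ℝ := fun N => Real.log (L N) + Real.log (4 * Real.pi) with hqdef
  set ρ : ℕ → ℝ := fun N => q N / (2 * Real.sqrt (2 * L N)) with hρdef
  have hbeq : ∀ N, bseq d N = Real.sqrt (2 * L N) - ρ N := fun N => rfl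
  clear_value m L q ρ
  have hq0 : ∀ N, 0 ≤ q N := by
    intro N
    have h1 : 0 ≤ Real.log (L N) := Real.log_nonneg (hL1 N).le
    have h2 : 0 ≤ Real.log (4 * Real.pi) :=
      Real.log_nonneg (by nlinarith [Real.pi_gt_three])
    simp only [hqdef]; linarith
  have ha0 : ∀ N, 0 < Real.sqrt (2 * L N) := by
    intro N; exact Real.sqrt_pos.mpr (by linarith [hL1 N])
  have hρ0 : ∀ N, 0 ≤ ρ N := fun N => by
    rw [hρdef]; exact div_nonneg (hq0 N) (by linarith [ha0 N])
  have hsL1 : ∀ N, 1 ≤ Real.sqrt (L N) := fun N => Real.one_le_sqrt.mpr (hL1 N).le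
  have hρ52 : ∀ N, ρ N ≤ 5 / 2 := by
    intro N
    have hlogL : Real.log (L N) ≤ 2 * Real.sqrt (L N) := by
      have h1 : Real.log (Real.sqrt (L N)) = Real.log (L N) / 2 :=
        Real.log_sqrt (by linarith [hL1 N])
      have h2 : Real.log (Real.sqrt (L N)) ≤ Real.sqrt (L N) - 1 :=
        Real.log_le_sub_one_of_pos (by linarith [hsL1 N])
      linarith
    have hlog4π : Real.log (4 * Real.pi) ≤ 3 := by
      have h1 : Real.log (4 * Real.pi) ≤ Real.log 16 := by
        apply (Real.log_le_log_iff (by positivity) (by norm_num)).mpr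
        nlinarith [Real.pi_le_four]
      have h2 : Real.log 16 = 4 * Real.log 2 := by
        rw [show (16:ℝ) = 2 ^ (4:ℕ) by norm_num, Real.log_pow]; norm_num
      nlinarith [Real.log_two_lt_d9]
    have hqb : q N ≤ 5 * Real.sqrt (L N) := by
      simp only [hqdef]
      nlinarith [hsL1 N]
    have hden : 2 * Real.sqrt (L N) ≤ 2 * Real.sqrt (2 * L N) := by
      have := Real.sqrt_le_sqrt (by linarith [hL1 N] : L N ≤ 2 * L N)
      linarith
    calc ρ N ≤ 5 * Real.sqrt (L N) / (2 * Real.sqrt (L N)) := by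
          rw [hρdef]
          exact div_le_div₀ (by positivity) hqb (by linarith [hsL1 N]) hden
      _ = 5 / 2 := by
          rw [mul_comm (5:ℝ) _, mul_comm (2:ℝ) _, mul_div_mul_left _ _ (ne_of_gt (by linarith [hsL1 N] : (0:ℝ) < Real.sqrt (L N)))]
  -- limits
  have hLN : Tendsto (fun N : ℕ => L N / N) atTop (𝓝 cbar) := by
    have h := hd.const_mul cbar
    rw [mul_one] at h
    refine h.congr fun N => ?_
    rw [hLdef, ← mul_div_assoc, mul_div_mul_left _ _ (ne_of_gt hc1)]
  have hsqN : Tendsto (fun N : ℕ => Real.sqrt N) atTop atTop := by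
    apply (tendsto_atTop_atTop_of_monotone (fun x y h => Real.sqrt_le_sqrt h) ?_).comp
      tendsto_natCast_atTop_atTop
    exact fun b => ⟨b ^ 2, by rw [Real.sqrt_sq_eq_abs]; exact le_abs_self b⟩
  have hρsN : Tendsto (fun N : ℕ => ρ N / Real.sqrt N) atTop (𝓝 0) := by
    apply squeeze_zero' (g := fun N : ℕ => (5/2) / Real.sqrt N)
    · exact Eventually.of_forall fun N => div_nonneg (hρ0 N) (Real.sqrt_nonneg _)
    · filter_upwards [eventually_ge_atTop 1] with N hN
      have h1 : (1:ℝ) ≤ Real.sqrt N := Real.one_le_sqrt.mpr (by exact_mod_cast hN)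
      exact div_le_div₀ (by norm_num) (hρ52 N) (by linarith) le_rfl
    · exact Tendsto.div_atTop tendsto_const_nhds hsqN
  have hbs : Tendsto (fun N : ℕ => bseq d N / Real.sqrt N) atTop
      (𝓝 (Real.sqrt (2 * cbar))) := by
    have h2L : Tendsto (fun N : ℕ => 2 * L N / N) atTop (𝓝 (2 * cbar)) := by
      refine (hLN.const_mul 2).congr fun N => ?_
      rw [mul_div_assoc]
    have h2 : Tendsto (fun N : ℕ => Real.sqrt (2 * L N) / Real.sqrt N - ρ N / Real.sqrt N)
        atTop (𝓝 (Real.sqrt (2 * cbar) - 0)) := by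
      refine Tendsto.sub (h2L.sqrt.congr fun N => ?_) hρsN
      rw [Real.sqrt_div (by linarith [hL1 N]) _]
    rw [sub_zero] at h2
    refine h2.congr fun N => ?_
    rw [hbeq N, sub_div]
  have hαb : Tendsto (fun N : ℕ => bseq d N / (β * Real.sqrt N)) atTop
      (𝓝 (Real.sqrt (2 * cbar) / β)) := by
    refine (hbs.div_const β).congr fun N => ?_
    rw [div_div, mul_comm]
  have hE : Tendsto (fun N : ℕ => d N / Bseq β d N) atTop (𝓝 0) := by
    have hψ : Tendsto (fun N : ℕ => β * (bseq d N / Real.sqrt N) - L N / N) atTop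
        (𝓝 (β * Real.sqrt (2 * cbar) - cbar)) := (hbs.const_mul β).sub hLN
    have hκ : 0 < β * Real.sqrt (2 * cbar) - cbar := by nlinarith
    have hmul := Tendsto.pos_mul_atTop hκ hψ tendsto_natCast_atTop_atTop
    have hneg : Tendsto (fun N : ℕ => L N - β * Real.sqrt N * bseq d N) atTop atBot := by
      refine (tendsto_neg_atTop_atBot.comp hmul).congr' ?_
      filter_upwards [eventually_ge_atTop 1] with N hN
      have hN1 : (1:ℝ) ≤ (N:ℝ) := by exact_mod_cast hN
      have hN0 : ((N:ℝ)) ≠ 0 := by linarith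
      have e1 : (bseq d N / Real.sqrt N) * N = bseq d N * Real.sqrt N := by
        rw [div_mul_eq_mul_div, mul_div_assoc,
          show ((N:ℝ)) / Real.sqrt N = Real.sqrt N from Real.div_sqrt]
      simp only [Function.comp_apply]
      rw [sub_mul, mul_assoc, e1, div_mul_cancel₀ _ hN0]
      ring
    refine (Real.tendsto_exp_atBot.comp hneg).congr fun N => ?_
    simp only [Function.comp_apply]
    rw [hLdef, Real.exp_sub, Real.exp_log (hd0 N)]
    rfl
  -- the constant
  have hC : 0 < 1 + 2 * m / (β - m) := by
    have := div_pos (by linarith : (0:ℝ) < 2 * m) hβm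
    linarith
  refine ⟨1 + 2 * m / (β - m), hC, 1, ⟨zero_lt_one, le_refl 1⟩, ?_⟩
  intro δ hδ
  obtain ⟨hδ0, hδ1⟩ := hδ
  have hδα : 0 < δ ^ (1 - Real.sqrt (2 * cbar) / β) := Real.rpow_pos_of_pos hδ0 _
  have e2 : ∀ᶠ N : ℕ in atTop, L N / N ≤ m ^ 2 / 2 :=
    hLN.eventually_le_const (by nlinarith)
  have e3 : ∀ᶠ N : ℕ in atTop,
      Real.exp ((Real.sqrt (2 * cbar) / β - bseq d N / (β * Real.sqrt N)) * Real.log δ)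
        ≤ 2 := by
    have h1 : Tendsto (fun N : ℕ =>
        (Real.sqrt (2 * cbar) / β - bseq d N / (β * Real.sqrt N)) * Real.log δ)
        atTop (𝓝 0) := by
      have := ((tendsto_const_nhds (x := Real.sqrt (2 * cbar) / β)).sub hαb).mul_const (Real.log δ)
      simpa using this
    have h0 := (Real.continuous_exp.tendsto 0).comp h1
    rw [Real.exp_zero] at h0
    exact h0.eventually_le_const one_lt_two
  have e4 : ∀ᶠ N : ℕ in atTop, d N / Bseq β d N ≤ δ ^ (1 - Real.sqrt (2 * cbar) / β) :=
    hE.eventually_le_const hδα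
  apply limsup_le_of_le
  · refine isCoboundedUnder_le_of_eventually_le (atTop : Filter ℕ) (x := 0) ?_
    refine Eventually.of_forall fun N => ?_
    have hnn : 0 ≤ ∫ e in {e : ℝ | Real.exp (β * Real.sqrt N * e) ≤ δ * Bseq β d N},
        Real.exp (β * Real.sqrt N * e) ∂halfGaussian :=
      integral_nonneg fun e => (Real.exp_pos _).le
    exact mul_nonneg (div_nonneg (hd0 N).le (hB0 N).le) hnn
  filter_upwards [eventually_ge_atTop 1, e2, e3, e4] with N hN1 h2 h3 h4
  have hN1' : (1:ℝ) ≤ (N:ℝ) := by exact_mod_cast hN1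
  have hsN1 : (1:ℝ) ≤ Real.sqrt N := Real.one_le_sqrt.mpr hN1'
  have hsN0 : (0:ℝ) < Real.sqrt N := by linarith
  set u : ℝ := β * Real.sqrt N with hu_def
  have hu : 0 < u := by positivity
  have hK : 0 < δ * Bseq β d N := mul_pos hδ0 (hB0 N)
  set t : ℝ := Real.log (δ * Bseq β d N) / u with ht_def
  clear_value u t
  have hSet : {e : ℝ | Real.exp (u * e) ≤ δ * Bseq β d N} = Set.Iic t := by
    ext e
    simp only [Set.mem_setOf_eq, Set.mem_Iic]
    rw [← Real.le_log_iff_exp_le hK, mul_comm, ← le_div_iff₀ hu, ht_def]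
  rw [hSet]
  rcases lt_or_ge t 0 with hneg | ht0
  · rw [halfG_zero hneg, mul_zero]
    exact le_of_lt (mul_pos hC hδα)
  have hLm : L N ≤ m ^ 2 / 2 * N := by
    rw [div_le_iff₀ (by linarith : (0:ℝ) < (N:ℝ))] at h2
    linarith
  have hbm : bseq d N ≤ m * Real.sqrt N := by
    calc bseq d N ≤ Real.sqrt (2 * L N) := by rw [hbeq]; linarith [hρ0 N]
      _ ≤ Real.sqrt (m ^ 2 * N) := Real.sqrt_le_sqrt (by nlinarith)
      _ = m * Real.sqrt N := by rw [Real.sqrt_mul (sq_nonneg m), Real.sqrt_sq hm0.le]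
  have hlogB : Real.log (Bseq β d N) = u * bseq d N := by
    rw [show Bseq β d N = Real.exp (u * bseq d N) from by rw [hu_def]; rfl, Real.log_exp]
  have ht_eq : t = bseq d N + Real.log δ / u := by
    rw [ht_def, Real.log_mul (ne_of_gt hδ0) (ne_of_gt (hB0 N)), hlogB, add_div,
      mul_div_cancel_left₀ _ (ne_of_gt hu)]
    ring
  have hlogδ : Real.log δ ≤ 0 := Real.log_nonpos hδ0.le hδ1
  have htb : t ≤ bseq d N := by
    have hdu : Real.log δ / u ≤ 0 := div_nonpos_iff.mpr (Or.inr ⟨hlogδ, hu.le⟩)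
    rw [ht_eq]; linarith
  have htu : t < u := by
    have : m * Real.sqrt N < β * Real.sqrt N := by nlinarith
    calc t ≤ bseq d N := htb
      _ ≤ m * Real.sqrt N := hbm
      _ < u := by rw [hu_def]; exact this
  have hut0' : 0 < u - t := by linarith
  have hsqπ : Real.sqrt (2 * Real.pi) ≠ 0 := by positivity
  have hI := halfG_bound hu ht0 htu
  have hDB0 : 0 ≤ d N / Bseq β d N := div_nonneg (hd0 N).le (hB0 N).le
  -- the key second-term bound
  have hut : u * t = Real.log (δ * Bseq β d N) := by
    rw [ht_def, mul_div_cancel₀ _ (ne_of_gt hu)]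
  have heq : d N / Bseq β d N *
      ((Real.sqrt (2 * Real.pi))⁻¹ * (Real.exp (u * t - t ^ 2 / 2) / (u - t)))
      = δ * (d N * Real.exp (-(t ^ 2) / 2)) / ((u - t) * Real.sqrt (2 * Real.pi)) := by
    rw [show u * t - t ^ 2 / 2 = Real.log (δ * Bseq β d N) + -(t ^ 2) / 2 by
        rw [← hut]; ring,
      Real.exp_add, Real.exp_log hK]
    field_simp [ne_of_gt (hB0 N), hsqπ, ne_of_gt hut0']
  have hEb : Real.exp (-(t ^ 2) / 2) ≤ Real.exp (-(bseq d N ^ 2) / 2) *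
      Real.exp (-(bseq d N / u) * Real.log δ) := by
    rw [← Real.exp_add, Real.exp_le_exp]
    have ht2 : t ^ 2 = (bseq d N + Real.log δ / u) ^ 2 := by rw [← ht_eq]
    have hsq := sq_nonneg (Real.log δ / u)
    have hexpand : -(t ^ 2) / 2 ≤ -(bseq d N ^ 2) / 2 - bseq d N * (Real.log δ / u) := by
      nlinarith
    have : -(bseq d N / u) * Real.log δ = -(bseq d N * (Real.log δ / u)) := by ring
    linarith [hexpand, this.ge, this.le]
  have hb2 : 2 * L N - q N ≤ bseq d N ^ 2 := by
    have ha2 : Real.sqrt (2 * L N) ^ 2 = 2 * L N := Real.sq_sqrt (by linarith [hL1 N])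
    have hbe : bseq d N = Real.sqrt (2 * L N) - ρ N := hbeq N
    have hρq : ρ N * (2 * Real.sqrt (2 * L N)) = q N := by
      rw [hρdef]; exact div_mul_cancel₀ _ (ne_of_gt (by linarith [ha0 N]))
    nlinarith [sq_nonneg (ρ N)]
  have hdexp : d N * Real.exp (-(bseq d N ^ 2) / 2)
      ≤ Real.sqrt (2 * Real.pi) * Real.sqrt (2 * L N) := by
    have h1 : Real.exp (-(bseq d N ^ 2) / 2) ≤ Real.exp (-(L N) + q N / 2) := by
      rw [Real.exp_le_exp]; linarith
    have hLN' : L N = Real.log (d N) := by rw [hLdef]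
    have hqN' : q N = Real.log (L N) + Real.log (4 * Real.pi) := by rw [hqdef]
    have h2 : Real.exp (-(L N) + q N / 2)
        = (d N)⁻¹ * (Real.sqrt (L N) * Real.sqrt (4 * Real.pi)) := by
      rw [Real.exp_add, Real.exp_neg]
      congr 1
      · rw [hLN', Real.exp_log (hd0 N)]
      · rw [hqN', add_div, Real.exp_add,
          exp_half_log (by linarith [hL1 N] : (0:ℝ) < L N),
          exp_half_log (by positivity : (0:ℝ) < 4 * Real.pi)]
    have h3 : Real.sqrt (L N) * Real.sqrt (4 * Real.pi)
        = Real.sqrt (2 * Real.pi) * Real.sqrt (2 * L N) := by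
      rw [← Real.sqrt_mul (by linarith [hL1 N] : (0:ℝ) ≤ L N),
        ← Real.sqrt_mul (by positivity : (0:ℝ) ≤ 2 * Real.pi)]
      ring_nf
    calc d N * Real.exp (-(bseq d N ^ 2) / 2)
        ≤ d N * ((d N)⁻¹ * (Real.sqrt (L N) * Real.sqrt (4 * Real.pi))) := by
          rw [← h2]; exact mul_le_mul_of_nonneg_left h1 (hd0 N).le
      _ = Real.sqrt (L N) * Real.sqrt (4 * Real.pi) := by
          rw [← mul_assoc, mul_inv_cancel₀ (ne_of_gt (hd0 N)), one_mul]
      _ = Real.sqrt (2 * Real.pi) * Real.sqrt (2 * L N) := h3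
  have hδe : δ * Real.exp (-(bseq d N / u) * Real.log δ)
      ≤ 2 * δ ^ (1 - Real.sqrt (2 * cbar) / β) := by
    have h1 : δ * Real.exp (-(bseq d N / u) * Real.log δ)
        = Real.exp ((1 - Real.sqrt (2 * cbar) / β) * Real.log δ) *
          Real.exp ((Real.sqrt (2 * cbar) / β - bseq d N / u) * Real.log δ) := by
      rw [← Real.exp_add]
      nth_rewrite 1 [← Real.exp_log hδ0]
      rw [← Real.exp_add]
      congr 1
      ring
    rw [h1, Real.rpow_def_of_pos hδ0, mul_comm (Real.log δ)]
    have h2 : Real.exp ((Real.sqrt (2 * cbar) / β - bseq d N / u) * Real.log δ) ≤ 2 := h3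
    have h5 : 0 < Real.exp ((1 - Real.sqrt (2 * cbar) / β) * Real.log δ) := Real.exp_pos _
    nlinarith
  have hdiv : Real.sqrt (2 * L N) / (u - t) ≤ m / (β - m) := by
    have h5 : Real.sqrt (2 * L N) ≤ m * Real.sqrt N := by
      calc Real.sqrt (2 * L N) ≤ Real.sqrt (m ^ 2 * N) := Real.sqrt_le_sqrt (by nlinarith)
        _ = m * Real.sqrt N := by rw [Real.sqrt_mul (sq_nonneg m), Real.sqrt_sq hm0.le]
    have h6 : (β - m) * Real.sqrt N ≤ u - t := by
      have h7 : t ≤ m * Real.sqrt N := le_trans htb hbm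
      have h8 : u = β * Real.sqrt N := hu_def
      nlinarith
    calc Real.sqrt (2 * L N) / (u - t) ≤ (m * Real.sqrt N) / ((β - m) * Real.sqrt N) :=
          div_le_div₀ (by positivity) h5 (by positivity) h6
      _ = m / (β - m) := by
          rw [mul_comm m, mul_comm (β - m), mul_div_mul_left _ _ (ne_of_gt hsN0)]
  have hterm2 : d N / Bseq β d N *
      ((Real.sqrt (2 * Real.pi))⁻¹ * (Real.exp (u * t - t ^ 2 / 2) / (u - t)))
      ≤ 2 * m / (β - m) * δ ^ (1 - Real.sqrt (2 * cbar) / β) := by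
    calc d N / Bseq β d N *
        ((Real.sqrt (2 * Real.pi))⁻¹ * (Real.exp (u * t - t ^ 2 / 2) / (u - t)))
        = δ * (d N * Real.exp (-(t ^ 2) / 2)) / ((u - t) * Real.sqrt (2 * Real.pi)) := heq
      _ ≤ δ * (d N * (Real.exp (-(bseq d N ^ 2) / 2) *
            Real.exp (-(bseq d N / u) * Real.log δ))) / ((u - t) * Real.sqrt (2 * Real.pi)) := by
          gcongr
          exact (hd0 N).le
      _ = (δ * Real.exp (-(bseq d N / u) * Real.log δ)) *
            (d N * Real.exp (-(bseq d N ^ 2) / 2)) / ((u - t) * Real.sqrt (2 * Real.pi)) := by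
          ring
      _ ≤ (δ * Real.exp (-(bseq d N / u) * Real.log δ)) *
            (Real.sqrt (2 * Real.pi) * Real.sqrt (2 * L N)) /
              ((u - t) * Real.sqrt (2 * Real.pi)) := by
          gcongr
      _ = (δ * Real.exp (-(bseq d N / u) * Real.log δ)) *
            (Real.sqrt (2 * L N) / (u - t)) := by
          field_simp
      _ ≤ (2 * δ ^ (1 - Real.sqrt (2 * cbar) / β)) * (m / (β - m)) := by
          apply mul_le_mul hδe hdiv (by positivity) (by positivity)
      _ = 2 * m / (β - m) * δ ^ (1 - Real.sqrt (2 * cbar) / β) := by ring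
  calc d N / Bseq β d N * ∫ e in Set.Iic t, Real.exp (u * e) ∂halfGaussian
      ≤ d N / Bseq β d N *
        (1 + (Real.sqrt (2 * Real.pi))⁻¹ * (Real.exp (u * t - t ^ 2 / 2) / (u - t))) :=
        mul_le_mul_of_nonneg_left hI hDB0
    _ = d N / Bseq β d N + d N / Bseq β d N *
        ((Real.sqrt (2 * Real.pi))⁻¹ * (Real.exp (u * t - t ^ 2 / 2) / (u - t))) := by ring
    _ ≤ δ ^ (1 - Real.sqrt (2 * cbar) / β) +
        2 * m / (β - m) * δ ^ (1 - Real.sqrt (2 * cbar) / β) := add_le_add h4 hterm2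
    _ = (1 + 2 * m / (β - m)) * δ ^ (1 - Real.sqrt (2 * cbar) / β) := by ring
end

section
/- Let N ≥ 1, a ≥ 0 and let (E_x)_{x∈V_N} be nonnegative real numbers, with associated generator matrix L. For t > 0, define the Green function G^t(y,y) = ∫_0^{+∞} e^{−s/t} (exp(sL))(y,y) ds. Then for every y ∈ V_N and every t > 0, G^t(y,y) ≤ t·2^{−N} + t/(1+2t); in particular G^t(y,y) ≤ 1 whenever t·2^{−N} ≤ 1/2. -/
open MeasureTheory ProbabilityTheory Filter

open Matrix

lemma exp_integral (b : ℝ) (hb : 0 < b) : ∫ s in Set.Ioi (0:ℝ), Real.exp (-(b*s)) = 1/b := by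
  have h : ∀ x ∈ Set.Ici (0:ℝ), HasDerivAt (fun s => -(1/b) * Real.exp (-(b*s))) (Real.exp (-(b*x))) x := by
    intro x _
    have : HasDerivAt (fun s : ℝ => -(b*s)) (-b) x := by
      simpa using ((hasDerivAt_id x).const_mul (-b))
    have := (this.exp).const_mul (-(1/b))
    refine this.congr_deriv ?_
    field_simp
  have hint : IntegrableOn (fun s => Real.exp (-(b*s))) (Set.Ioi 0) := by
    simpa [neg_mul] using exp_neg_integrableOn_Ioi 0 hb
  have htend : Tendsto (fun s => -(1/b) * Real.exp (-(b*s))) atTop (nhds 0) := by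
    have h1 : Tendsto (fun s : ℝ => -(b*s)) atTop atBot :=
      tendsto_neg_atBot_iff.2 (tendsto_atTop_atTop_of_monotone
        (fun u v huv => by nlinarith) (fun c => ⟨max 0 (c/b), by rw [max_def]; split <;> nlinarith [div_le_iff₀ hb |>.1 (le_refl (c/b))]⟩))
    have := (Real.tendsto_exp_atBot.comp h1).const_mul (-(1/b))
    simpa using this
  rw [integral_Ioi_of_hasDerivAt_of_tendsto' h hint htend]
  field_simp
  simp

lemma exp_integrable (b : ℝ) (hb : 0 < b) :
    IntegrableOn (fun s => Real.exp (-(b*s))) (Set.Ioi (0:ℝ)) := by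
  simpa [neg_mul] using exp_neg_integrableOn_Ioi 0 hb

lemma nbr_symm {N : ℕ} {x y : Fin N → Bool} (h : nbr x y) : nbr y x := by
  unfold nbr at *
  rw [← h]; congr 1; ext i; simp [ne_comm]

lemma nbr_irrefl {N : ℕ} (x : Fin N → Bool) : ¬ nbr x x := by
  unfold nbr; simp

lemma card_diff_cons {N : ℕ} (b c : Bool) (x z : Fin N → Bool) :
    (Finset.univ.filter fun i => (Fin.cons b x : Fin (N+1) → Bool) i ≠ (Fin.cons c z : Fin (N+1) → Bool) i).card
      = (if b = c then 0 else 1) + (Finset.univ.filter fun i => x i ≠ z i).card := by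
  rw [show (Finset.univ.filter fun i => (Fin.cons b x : Fin (N+1) → Bool) i ≠ (Fin.cons c z : Fin (N+1) → Bool) i).card
      = ∑ i : Fin (N+1), if (Fin.cons b x : Fin (N+1) → Bool) i ≠ (Fin.cons c z : Fin (N+1) → Bool) i then 1 else 0 from
      Finset.card_filter (fun i => (Fin.cons b x : Fin (N+1) → Bool) i ≠ (Fin.cons c z : Fin (N+1) → Bool) i) Finset.univ,
    show (Finset.univ.filter fun i => x i ≠ z i).card
      = ∑ i : Fin N, if x i ≠ z i then 1 else 0 from Finset.card_filter (fun i => x i ≠ z i) Finset.univ,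
    Fin.sum_univ_succ]
  simp [Fin.cons_zero, Fin.cons_succ]

lemma nbr_cons {N : ℕ} (b c : Bool) (x z : Fin N → Bool) :
    nbr (Fin.cons b x) (Fin.cons c z) ↔ (b = c ∧ nbr x z) ∨ (b ≠ c ∧ x = z) := by
  unfold nbr
  rw [card_diff_cons]
  constructor
  · intro h
    by_cases hbc : b = c
    · simp [hbc] at h; exact Or.inl ⟨hbc, h⟩
    · simp [hbc] at h
      refine Or.inr ⟨hbc, funext fun i => ?_⟩
      by_contra hi
      have : i ∈ Finset.univ.filter fun i => x i ≠ z i := by simpa using hi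
      simp [h] at this
  · rintro (⟨hbc, h⟩ | ⟨hbc, rfl⟩) <;> simp [hbc, *]

-- connectivity
lemma const_of_nbr {N : ℕ} (v : (Fin N → Bool) → ℝ)
    (h : ∀ x z, nbr x z → v x = v z) : ∀ x z, v x = v z := by
  suffices H : ∀ (n : ℕ) (x z : Fin N → Bool),
      (Finset.univ.filter fun i => x i ≠ z i).card = n → v x = v z by
    intro x z; exact H _ x z rfl
  intro n
  induction n with
  | zero =>
    intro x z hc
    rw [Finset.card_eq_zero, Finset.filter_eq_empty_iff] at hc
    have : x = z := funext fun i => by have := hc (Finset.mem_univ i); simpa using this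
    rw [this]
  | succ n ih =>
    intro x z hc
    have hne : (Finset.univ.filter fun i => x i ≠ z i).Nonempty := by
      rw [← Finset.card_pos, hc]; omega
    obtain ⟨i, hi⟩ := hne
    have hxz : x i ≠ z i := by simpa using hi
    set x' := Function.update x i (z i) with hx'
    have h1 : nbr x x' := by
      unfold nbr
      have : (Finset.univ.filter fun j => x j ≠ x' j) = {i} := by
        ext j
        simp only [Finset.mem_filter, Finset.mem_univ, true_and, Finset.mem_singleton]
        by_cases hj : j = i
        · subst hj; simp [hx', Function.update_self, hxz]
        · simp [hx', Function.update_of_ne hj, hj]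
      rw [this]; simp
    have h2 : (Finset.univ.filter fun j => x' j ≠ z j).card = n := by
      have : (Finset.univ.filter fun j => x' j ≠ z j)
          = (Finset.univ.filter fun j => x j ≠ z j).erase i := by
        ext j
        simp only [Finset.mem_filter, Finset.mem_univ, true_and, Finset.mem_erase]
        by_cases hj : j = i
        · subst hj; simp [hx', Function.update_self]
        · simp [hx', Function.update_of_ne hj, hj]
      rw [this, Finset.card_erase_of_mem hi, hc]
      omega
    exact (h x x' h1).trans (ih x' z h2)

lemma card_VN (N : ℕ) : Fintype.card (Fin N → Bool) = 2 ^ N := by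
  simp [Fintype.card_fun]

lemma sum_cons_decomp {N : ℕ} (g : (Fin (N+1) → Bool) → ℝ) :
    ∑ x, g x = (∑ z, g (Fin.cons false z)) + ∑ z, g (Fin.cons true z) := by
  rw [← Equiv.sum_comp (Fin.consEquiv fun _ => Bool) g, Fintype.sum_prod_type,
    Fintype.sum_bool]
  simp [Fin.consEquiv]
  ring

lemma poincare : ∀ (N : ℕ) (f : (Fin N → Bool) → ℝ),
    4 * ((2^N : ℝ) * (∑ x, f x ^ 2) - (∑ x, f x)^2)
      ≤ 2^N * ∑ x, ∑ z, if nbr x z then (f x - f z)^2 else 0 := by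
  intro N
  induction N with
  | zero =>
    intro f
    have hn : ∀ x z : Fin 0 → Bool, ¬ nbr x z := by
      intro x z; unfold nbr; simp
    simp [hn]
  | succ N ih =>
    intro f
    set f0 : (Fin N → Bool) → ℝ := fun z => f (Fin.cons false z) with hf0
    set f1 : (Fin N → Bool) → ℝ := fun z => f (Fin.cons true z) with hf1
    have hS : ∑ x, f x = (∑ z, f0 z) + ∑ z, f1 z := sum_cons_decomp f
    have hQ : ∑ x, f x ^ 2 = (∑ z, f0 z ^ 2) + ∑ z, f1 z ^ 2 :=
      sum_cons_decomp (fun x => f x ^ 2)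
    have hD : ∑ x, ∑ z, (if nbr x z then (f x - f z)^2 else 0)
        = (∑ x, ∑ z, if nbr x z then (f0 x - f0 z)^2 else 0)
          + (∑ x, ∑ z, if nbr x z then (f1 x - f1 z)^2 else 0)
          + 2 * ∑ z, (f0 z - f1 z)^2 := by
      rw [sum_cons_decomp (fun x => ∑ z, if nbr x z then (f x - f z)^2 else 0)]
      have e0 : ∀ x' : Fin N → Bool,
          (∑ z, if nbr (Fin.cons false x') z then (f (Fin.cons false x') - f z)^2 else 0)
          = (∑ z, if nbr x' z then (f0 x' - f0 z)^2 else 0) + (f0 x' - f1 x')^2 := by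
        intro x'
        rw [sum_cons_decomp (fun z => if nbr (Fin.cons false x') z then (f (Fin.cons false x') - f z)^2 else 0)]
        have A : (∑ z, if nbr (Fin.cons false x') (Fin.cons false z) then (f (Fin.cons false x') - f (Fin.cons false z))^2 else 0)
            = ∑ z, if nbr x' z then (f0 x' - f0 z)^2 else 0 :=
          Finset.sum_congr rfl fun z _ => by simp [nbr_cons, hf0]
        have B : (∑ z, if nbr (Fin.cons false x') (Fin.cons true z) then (f (Fin.cons false x') - f (Fin.cons true z))^2 else 0)
            = (f0 x' - f1 x')^2 := by
          rw [Finset.sum_congr rfl (g := fun z => if x' = z then (f (Fin.cons false x') - f (Fin.cons true z))^2 else 0)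
            (fun z _ => by simp [nbr_cons])]
          simp [hf0, hf1]
        rw [A, B]
      have e1 : ∀ x' : Fin N → Bool,
          (∑ z, if nbr (Fin.cons true x') z then (f (Fin.cons true x') - f z)^2 else 0)
          = (∑ z, if nbr x' z then (f1 x' - f1 z)^2 else 0) + (f0 x' - f1 x')^2 := by
        intro x'
        rw [sum_cons_decomp (fun z => if nbr (Fin.cons true x') z then (f (Fin.cons true x') - f z)^2 else 0)]
        have A : (∑ z, if nbr (Fin.cons true x') (Fin.cons true z) then (f (Fin.cons true x') - f (Fin.cons true z))^2 else 0)
            = ∑ z, if nbr x' z then (f1 x' - f1 z)^2 else 0 :=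
          Finset.sum_congr rfl fun z _ => by simp [nbr_cons, hf1]
        have B : (∑ z, if nbr (Fin.cons true x') (Fin.cons false z) then (f (Fin.cons true x') - f (Fin.cons false z))^2 else 0)
            = (f1 x' - f0 x')^2 := by
          rw [Finset.sum_congr rfl (g := fun z => if x' = z then (f (Fin.cons true x') - f (Fin.cons false z))^2 else 0)
            (fun z _ => by simp [nbr_cons])]
          simp [hf0, hf1]
        rw [A, B]
        ring
      rw [Finset.sum_congr rfl (fun x' _ => e0 x'), Finset.sum_congr rfl (fun x' _ => e1 x'),
        Finset.sum_add_distrib, Finset.sum_add_distrib]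
      ring
    have hCS : ((∑ z, (f0 z - f1 z))^2 : ℝ) ≤ 2^N * ∑ z, (f0 z - f1 z)^2 := by
      have := sq_sum_le_card_mul_sum_sq (s := (Finset.univ : Finset (Fin N → Bool)))
        (f := fun z => f0 z - f1 z)
      simpa [Finset.card_univ, card_VN] using this
    have ih0 := ih f0
    have ih1 := ih f1
    have hSd : ∑ z, (f0 z - f1 z) = (∑ z, f0 z) - ∑ z, f1 z := by
      rw [Finset.sum_sub_distrib]
    rw [hS, hQ, hD]
    rw [hSd] at hCS
    rw [pow_succ]
    nlinarith [ih0, ih1, hCS]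

section Gen
variable {N : ℕ} {a : ℝ} {E : (Fin N → Bool) → ℝ}

lemma gen_symm_entry (x z : Fin N → Bool) : gen N a E x z = gen N a E z x := by
  unfold gen
  by_cases h : x = z
  · subst h; simp
  · rw [if_neg h, if_neg (Ne.symm h)]
    by_cases hn : nbr x z
    · rw [if_pos hn, if_pos (nbr_symm hn), add_comm (E x)]
    · rw [if_neg hn, if_neg (fun hc => hn (nbr_symm hc))]

lemma gen_isHermitian : (gen N a E).IsHermitian := by
  ext x z
  simp [Matrix.conjTranspose_apply, gen_symm_entry z x]

lemma gen_apply (x z : Fin N → Bool) :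
    gen N a E x z = (if x = z then -(∑ w, if nbr x w then Real.exp (a * (E x + E w)) else 0) else 0)
      + (if nbr x z then Real.exp (a * (E x + E z)) else 0) := by
  unfold gen
  by_cases h : x = z
  · subst h; simp [nbr_irrefl]
  · simp [h]

lemma gen_rowsum (x : Fin N → Bool) : ∑ z, gen N a E x z = 0 := by
  simp only [gen_apply, Finset.sum_add_distrib, Finset.sum_ite_eq, Finset.mem_univ, if_true]
  simp

/-- quadratic form identity -/
lemma gen_quadform (v : (Fin N → Bool) → ℝ) :
    ∑ x, ∑ z, (if nbr x z then Real.exp (a * (E x + E z)) * (v x - v z)^2 else 0)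
      = -2 * ∑ x, v x * (gen N a E *ᵥ v) x := by
  have expand : ∀ x z : Fin N → Bool, (if nbr x z then Real.exp (a * (E x + E z)) * (v x - v z)^2 else 0)
      = (if nbr x z then Real.exp (a * (E x + E z)) else 0) * v x ^ 2
        + (if nbr x z then Real.exp (a * (E x + E z)) else 0) * v z ^ 2
        - 2 * ((if nbr x z then Real.exp (a * (E x + E z)) else 0) * v x * v z) := by
    intro x z
    by_cases h : nbr x z <;> simp [h] <;> ring
  simp only [expand, Finset.sum_sub_distrib, Finset.sum_add_distrib]
  have h1 : ∑ x, ∑ z, (if nbr x z then Real.exp (a * (E x + E z)) else 0) * v x ^ 2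
      = ∑ x, (∑ z, if nbr x z then Real.exp (a * (E x + E z)) else 0) * v x ^ 2 :=
    Finset.sum_congr rfl fun x _ => by rw [Finset.sum_mul]
  have h2 : ∑ x, ∑ z, (if nbr x z then Real.exp (a * (E x + E z)) else 0) * v z ^ 2
      = ∑ x, (∑ z, if nbr x z then Real.exp (a * (E x + E z)) else 0) * v x ^ 2 := by
    rw [Finset.sum_comm]
    refine Finset.sum_congr rfl fun z _ => ?_
    rw [Finset.sum_mul]
    refine Finset.sum_congr rfl fun x _ => ?_
    congr 1
    by_cases h : nbr x z
    · rw [if_pos h, if_pos (nbr_symm h), add_comm (E x)]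
    · rw [if_neg h, if_neg fun hc => h (nbr_symm hc)]
  have hmv : ∀ x, v x * (gen N a E *ᵥ v) x
      = -((∑ z, if nbr x z then Real.exp (a * (E x + E z)) else 0) * v x ^ 2)
        + ∑ z, (if nbr x z then Real.exp (a * (E x + E z)) else 0) * v x * v z := by
    intro x
    rw [Matrix.mulVec, dotProduct, Finset.mul_sum]
    have : ∀ z : Fin N → Bool, v x * (gen N a E x z * v z)
        = (if x = z then -(∑ w, if nbr x w then Real.exp (a * (E x + E w)) else 0) else 0) * (v x * v z)
          + (if nbr x z then Real.exp (a * (E x + E z)) else 0) * v x * v z := by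
      intro z; rw [gen_apply]; ring
    simp only [this, Finset.sum_add_distrib, ite_mul, zero_mul, Finset.sum_ite_eq,
      Finset.mem_univ, if_true]
    ring
  have hpull : ∑ x, ∑ z, 2 * ((if nbr x z then Real.exp (a * (E x + E z)) else 0) * v x * v z)
      = 2 * ∑ x, ∑ z, (if nbr x z then Real.exp (a * (E x + E z)) else 0) * v x * v z := by
    rw [Finset.mul_sum]
    exact Finset.sum_congr rfl fun x _ => by rw [Finset.mul_sum]
  rw [h1, h2, hpull]
  simp only [hmv, Finset.sum_add_distrib]
  rw [Finset.sum_neg_distrib]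
  ring


lemma exp_entry (s : ℝ) (y : Fin N → Bool) :
    (NormedSpace.exp (s • gen N a E)) y y
      = ∑ i, Real.exp (s * (gen_isHermitian (N := N) (a := a) (E := E)).eigenvalues i)
          * (((gen_isHermitian (N := N) (a := a) (E := E)).eigenvectorUnitary :
              Matrix (Fin N → Bool) (Fin N → Bool) ℝ) y i)^2 := by
  set hH : (gen N a E).IsHermitian := gen_isHermitian with hhH
  set U : Matrix (Fin N → Bool) (Fin N → Bool) ℝ :=
    (hH.eigenvectorUnitary : Matrix (Fin N → Bool) (Fin N → Bool) ℝ) with hU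
  have hUstar : U * star U = 1 := hH.eigenvectorUnitary.2.2
  have hUinv : U⁻¹ = star U := Matrix.inv_eq_right_inv hUstar
  have hUunit : IsUnit U := ⟨⟨U, star U, hUstar, hH.eigenvectorUnitary.2.1⟩, rfl⟩
  have hspec : gen N a E = U * Matrix.diagonal hH.eigenvalues * U⁻¹ := by
    rw [hUinv]
    conv_lhs => rw [hH.spectral_theorem]
    rfl
  have hgoal : s • gen N a E = U * (Matrix.diagonal (s • hH.eigenvalues)) * U⁻¹ := by
    rw [Matrix.diagonal_smul, Matrix.mul_smul, Matrix.smul_mul, ← hspec]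
  rw [hgoal, Matrix.exp_conj U _ hUunit, Matrix.exp_diagonal, hUinv, Matrix.mul_apply]
  refine Finset.sum_congr rfl fun i _ => ?_
  rw [Matrix.mul_diagonal, Matrix.star_apply, star_trivial]
  have : NormedSpace.exp (s • hH.eigenvalues) i = Real.exp (s * hH.eigenvalues i) := by
    rw [Pi.exp_def, Real.exp_eq_exp_ℝ]
    simp [smul_eq_mul]
  rw [this]
  ring

lemma col_eig (i : Fin N → Bool) :
    gen N a E *ᵥ (fun x => ((gen_isHermitian (N := N) (a := a) (E := E)).eigenvectorUnitary :
        Matrix (Fin N → Bool) (Fin N → Bool) ℝ) x i)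
      = (gen_isHermitian (N := N) (a := a) (E := E)).eigenvalues i
          • (fun x => ((gen_isHermitian (N := N) (a := a) (E := E)).eigenvectorUnitary :
              Matrix (Fin N → Bool) (Fin N → Bool) ℝ) x i) := by
  have h := (gen_isHermitian (N := N) (a := a) (E := E)).mulVec_eigenvectorBasis i
  convert h using 2 <;> simp [Matrix.IsHermitian.eigenvectorUnitary_apply]

lemma col_orthonormal (i j : Fin N → Bool) :
    ∑ x, ((gen_isHermitian (N := N) (a := a) (E := E)).eigenvectorUnitary :
        Matrix (Fin N → Bool) (Fin N → Bool) ℝ) x i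
      * ((gen_isHermitian (N := N) (a := a) (E := E)).eigenvectorUnitary :
        Matrix (Fin N → Bool) (Fin N → Bool) ℝ) x j = if i = j then 1 else 0 := by
  have h := (gen_isHermitian (N := N) (a := a) (E := E)).eigenvectorUnitary.2.1
  have := congrFun (congrFun h i) j
  rw [Matrix.mul_apply] at this
  simp only [Matrix.star_apply, star_trivial] at this
  rw [this]
  by_cases hij : i = j <;> simp [hij, Matrix.one_apply]

lemma row_norm (y : Fin N → Bool) :
    ∑ i, (((gen_isHermitian (N := N) (a := a) (E := E)).eigenvectorUnitary :
        Matrix (Fin N → Bool) (Fin N → Bool) ℝ) y i)^2 = 1 := by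
  have h := (gen_isHermitian (N := N) (a := a) (E := E)).eigenvectorUnitary.2.2
  have := congrFun (congrFun h y) y
  rw [Matrix.mul_apply] at this
  simp only [Matrix.star_apply, star_trivial] at this
  simp only [Matrix.one_apply, if_pos rfl, if_true] at this
  rw [← this]
  exact Finset.sum_congr rfl fun i _ => by ring

lemma eig_nonzero_le (ha : 0 ≤ a) (hE : ∀ x, 0 ≤ E x) (i : Fin N → Bool)
    (hne : (gen_isHermitian (N := N) (a := a) (E := E)).eigenvalues i ≠ 0) :
    (gen_isHermitian (N := N) (a := a) (E := E)).eigenvalues i ≤ -2 := by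
  set hH : (gen N a E).IsHermitian := gen_isHermitian with hhH
  set U : Matrix (Fin N → Bool) (Fin N → Bool) ℝ :=
    (hH.eigenvectorUnitary : Matrix (Fin N → Bool) (Fin N → Bool) ℝ) with hU
  set v : (Fin N → Bool) → ℝ := fun x => U x i with hv
  set lam : ℝ := hH.eigenvalues i with hlam
  have heig : gen N a E *ᵥ v = lam • v := col_eig i
  have hnorm : ∑ x, v x ^ 2 = 1 := by
    have h := col_orthonormal (N := N) (a := a) (E := E) i i
    rw [if_pos rfl] at h
    rw [← h]
    exact Finset.sum_congr rfl fun x _ => by rw [hv]; ring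
  have hsum0 : ∑ x, v x = 0 := by
    have h1 : ∑ x, (gen N a E *ᵥ v) x = lam * ∑ x, v x := by
      rw [heig]
      simp [Finset.mul_sum]
    have h2 : ∑ x, (gen N a E *ᵥ v) x = 0 := by
      simp only [Matrix.mulVec, dotProduct]
      rw [Finset.sum_comm]
      refine Finset.sum_eq_zero fun z _ => ?_
      rw [← Finset.sum_mul]
      rw [Finset.sum_congr rfl (fun x _ => gen_symm_entry x z), gen_rowsum, zero_mul]
    have := h1.symm.trans h2
    exact (mul_eq_zero.mp this).resolve_left hne
  have hq : ∑ x, v x * (gen N a E *ᵥ v) x = lam := by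
    rw [heig]
    have : ∀ x : Fin N → Bool, v x * (lam • v) x = lam * v x ^ 2 := fun x => by
      simp [smul_eq_mul]; ring
    rw [Finset.sum_congr rfl fun x _ => this x, ← Finset.mul_sum, hnorm, mul_one]
  have hquad : ∑ x, ∑ z, (if nbr x z then Real.exp (a * (E x + E z)) * (v x - v z)^2 else 0)
      = -2 * lam := by rw [gen_quadform, hq]
  have hcomp : ∑ x, ∑ z, (if nbr x z then (v x - v z)^2 else 0)
      ≤ ∑ x, ∑ z, (if nbr x z then Real.exp (a * (E x + E z)) * (v x - v z)^2 else 0) := by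
    refine Finset.sum_le_sum fun x _ => Finset.sum_le_sum fun z _ => ?_
    by_cases h : nbr x z
    · rw [if_pos h, if_pos h]
      nlinarith [Real.one_le_exp (mul_nonneg ha (add_nonneg (hE x) (hE z))), sq_nonneg (v x - v z)]
    · rw [if_neg h, if_neg h]
  have hpoin := poincare N v
  rw [hnorm, hsum0] at hpoin
  have h2N : (0:ℝ) < 2^N := by positivity
  have hD : (4:ℝ) ≤ ∑ x, ∑ z, (if nbr x z then (v x - v z)^2 else 0) := by
    rw [mul_one, sub_eq_add_neg] at hpoin
    simp at hpoin
    nlinarith [hpoin]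
  linarith [hquad ▸ (hD.trans hcomp)]

lemma eig_zero_const (i : Fin N → Bool)
    (hz : (gen_isHermitian (N := N) (a := a) (E := E)).eigenvalues i = 0) :
    ∀ x z : Fin N → Bool,
      ((gen_isHermitian (N := N) (a := a) (E := E)).eigenvectorUnitary :
        Matrix (Fin N → Bool) (Fin N → Bool) ℝ) x i
      = ((gen_isHermitian (N := N) (a := a) (E := E)).eigenvectorUnitary :
        Matrix (Fin N → Bool) (Fin N → Bool) ℝ) z i := by
  set hH : (gen N a E).IsHermitian := gen_isHermitian with hhH
  set U : Matrix (Fin N → Bool) (Fin N → Bool) ℝ :=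
    (hH.eigenvectorUnitary : Matrix (Fin N → Bool) (Fin N → Bool) ℝ) with hU
  set v : (Fin N → Bool) → ℝ := fun x => U x i with hv
  have heig : gen N a E *ᵥ v = (0:ℝ) • v := hz ▸ col_eig i
  have hquad : ∑ x, ∑ z, (if nbr x z then Real.exp (a * (E x + E z)) * (v x - v z)^2 else 0)
      = 0 := by
    rw [gen_quadform, heig]
    simp
  have hnn : ∀ x ∈ Finset.univ, ∀ z ∈ (Finset.univ : Finset (Fin N → Bool)),
      (0:ℝ) ≤ (if nbr x z then Real.exp (a * (E x + E z)) * (v x - v z)^2 else 0) := by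
    intro x _ z _
    by_cases h : nbr x z
    · rw [if_pos h]; positivity
    · rw [if_neg h]
  have hzero : ∀ x z : Fin N → Bool,
      (if nbr x z then Real.exp (a * (E x + E z)) * (v x - v z)^2 else 0) = 0 := by
    intro x z
    have houter := (Finset.sum_eq_zero_iff_of_nonneg
      (fun x hx => Finset.sum_nonneg (hnn x hx))).mp hquad x (Finset.mem_univ x)
    exact (Finset.sum_eq_zero_iff_of_nonneg (fun z hzmem => hnn x (Finset.mem_univ x) z hzmem)).mp
      houter z (Finset.mem_univ z)
  refine const_of_nbr v fun x z h => ?_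
  have := hzero x z
  rw [if_pos h] at this
  have hepos : 0 < Real.exp (a * (E x + E z)) := Real.exp_pos _
  have : (v x - v z)^2 = 0 := by
    rcases mul_eq_zero.mp this with h' | h'
    · exact absurd h' (ne_of_gt hepos)
    · exact h'
  have := pow_eq_zero_iff (n := 2) (by norm_num) |>.mp this
  linarith [sub_eq_zero.mp this]

lemma eig_zero_sq (i : Fin N → Bool)
    (hz : (gen_isHermitian (N := N) (a := a) (E := E)).eigenvalues i = 0)
    (x : Fin N → Bool) :
    (((gen_isHermitian (N := N) (a := a) (E := E)).eigenvectorUnitary :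
        Matrix (Fin N → Bool) (Fin N → Bool) ℝ) x i)^2 = 1/2^N := by
  set U : Matrix (Fin N → Bool) (Fin N → Bool) ℝ :=
    ((gen_isHermitian (N := N) (a := a) (E := E)).eigenvectorUnitary :
      Matrix (Fin N → Bool) (Fin N → Bool) ℝ) with hU
  have hconst := eig_zero_const (N := N) (a := a) (E := E) i hz
  rw [← hU] at hconst
  have hnorm : ∑ z, (U z i) ^ 2 = 1 := by
    have h := col_orthonormal (N := N) (a := a) (E := E) i i
    rw [if_pos rfl] at h
    rw [← h]
    exact Finset.sum_congr rfl fun z _ => by ring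
  have : ∑ z : Fin N → Bool, (U z i)^2 = (2^N : ℝ) * (U x i)^2 := by
    rw [Finset.sum_congr rfl (g := fun z => (U x i)^2) (fun z _ => by rw [hconst z x]),
      Finset.sum_const, Finset.card_univ, card_VN, nsmul_eq_mul]
    push_cast
    ring
  rw [this] at hnorm
  have h2N : (0:ℝ) < 2^N := by positivity
  field_simp at hnorm ⊢
  linarith

lemma zero_eig_unique {i j : Fin N → Bool} (hij : i ≠ j)
    (hi : (gen_isHermitian (N := N) (a := a) (E := E)).eigenvalues i = 0)
    (hj : (gen_isHermitian (N := N) (a := a) (E := E)).eigenvalues j = 0) : False := by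
  set U : Matrix (Fin N → Bool) (Fin N → Bool) ℝ :=
    ((gen_isHermitian (N := N) (a := a) (E := E)).eigenvectorUnitary :
      Matrix (Fin N → Bool) (Fin N → Bool) ℝ) with hU
  set x0 : Fin N → Bool := fun _ => false with hx0
  have horth := col_orthonormal (N := N) (a := a) (E := E) i j
  rw [if_neg hij] at horth
  have hci := eig_zero_const (N := N) (a := a) (E := E) i hi
  have hcj := eig_zero_const (N := N) (a := a) (E := E) j hj
  rw [← hU] at horth hci hcj
  have : ∑ x : Fin N → Bool, U x i * U x j = (2^N : ℝ) * (U x0 i * U x0 j) := by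
    rw [Finset.sum_congr rfl (g := fun x => U x0 i * U x0 j)
      (fun x _ => by rw [hci x x0, hcj x x0]),
      Finset.sum_const, Finset.card_univ, card_VN, nsmul_eq_mul]
    push_cast
    ring
  rw [this] at horth
  have h2N : (0:ℝ) < 2^N := by positivity
  have hprod : U x0 i * U x0 j = 0 := by
    rcases mul_eq_zero.mp horth with h | h
    · exact absurd h (ne_of_gt h2N)
    · exact h
  have hsqi := eig_zero_sq (N := N) (a := a) (E := E) i hi x0
  have hsqj := eig_zero_sq (N := N) (a := a) (E := E) j hj x0
  rw [← hU] at hsqi hsqj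
  rcases mul_eq_zero.mp hprod with h | h
  · rw [h] at hsqi; simp at hsqi; exact absurd hsqi.symm (ne_of_gt h2N)
  · rw [h] at hsqj; simp at hsqj; exact absurd hsqj.symm (ne_of_gt h2N)

lemma heat_bound (ha : 0 ≤ a) (hE : ∀ x, 0 ≤ E x) (s : ℝ) (hs : 0 ≤ s) (y : Fin N → Bool) :
    0 ≤ (NormedSpace.exp (s • gen N a E)) y y ∧
    (NormedSpace.exp (s • gen N a E)) y y ≤ 1/2^N + Real.exp (-(2*s)) := by
  rw [exp_entry]
  set U : Matrix (Fin N → Bool) (Fin N → Bool) ℝ :=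
    ((gen_isHermitian (N := N) (a := a) (E := E)).eigenvectorUnitary :
      Matrix (Fin N → Bool) (Fin N → Bool) ℝ) with hU
  set ev : (Fin N → Bool) → ℝ := (gen_isHermitian (N := N) (a := a) (E := E)).eigenvalues with hev
  constructor
  · exact Finset.sum_nonneg fun i _ => mul_nonneg (Real.exp_pos _).le (sq_nonneg _)
  rw [← Finset.sum_filter_add_sum_filter_not Finset.univ (fun i => ev i = 0)
    (fun i => Real.exp (s * ev i) * (U y i)^2)]
  have h2N : (0:ℝ) < 2^N := by positivity
  have hpart1 : ∑ i ∈ Finset.univ.filter (fun i => ev i = 0),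
      Real.exp (s * ev i) * (U y i)^2 ≤ 1/2^N := by
    have hcard : (Finset.univ.filter (fun i => ev i = 0)).card ≤ 1 := by
      rw [Finset.card_le_one]
      intro i hi j hj
      by_contra hij
      exact zero_eig_unique hij (Finset.mem_filter.mp hi).2 (Finset.mem_filter.mp hj).2
    have hterm : ∀ i ∈ Finset.univ.filter (fun i => ev i = 0),
        Real.exp (s * ev i) * (U y i)^2 ≤ 1/2^N := by
      intro i hi
      have hz := (Finset.mem_filter.mp hi).2
      rw [hz, mul_zero, Real.exp_zero, one_mul, eig_zero_sq i hz y]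
    calc ∑ i ∈ Finset.univ.filter (fun i => ev i = 0), Real.exp (s * ev i) * (U y i)^2
        ≤ (Finset.univ.filter (fun i => ev i = 0)).card • (1/2^N : ℝ) :=
          Finset.sum_le_card_nsmul _ _ _ hterm
      _ ≤ 1 • (1/2^N : ℝ) := by
          refine nsmul_le_nsmul_left (by positivity) hcard
      _ = 1/2^N := one_smul _ _
  have hpart2 : ∑ i ∈ Finset.univ.filter (fun i => ¬ ev i = 0),
      Real.exp (s * ev i) * (U y i)^2 ≤ Real.exp (-(2*s)) := by
    have hterm : ∀ i ∈ Finset.univ.filter (fun i => ¬ ev i = 0),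
        Real.exp (s * ev i) * (U y i)^2 ≤ Real.exp (-(2*s)) * (U y i)^2 := by
      intro i hi
      have hne := (Finset.mem_filter.mp hi).2
      have hle := eig_nonzero_le ha hE i hne
      have : s * ev i ≤ -(2*s) := by nlinarith
      exact mul_le_mul_of_nonneg_right (Real.exp_le_exp.mpr this) (sq_nonneg _)
    calc ∑ i ∈ Finset.univ.filter (fun i => ¬ ev i = 0), Real.exp (s * ev i) * (U y i)^2
        ≤ ∑ i ∈ Finset.univ.filter (fun i => ¬ ev i = 0), Real.exp (-(2*s)) * (U y i)^2 :=
          Finset.sum_le_sum hterm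
      _ ≤ ∑ i, Real.exp (-(2*s)) * (U y i)^2 := by
          refine Finset.sum_le_sum_of_subset_of_nonneg (Finset.filter_subset _ _)
            fun i _ _ => by positivity
      _ = Real.exp (-(2*s)) := by rw [← Finset.mul_sum, row_norm, mul_one]
  linarith

end Gen

/-- Upper bound on the diagonal Green function with killing rate `1/t`. -/
theorem stmt14 (N : ℕ) (hN : 1 ≤ N) (a : ℝ) (ha : 0 ≤ a)
    (E : (Fin N → Bool) → ℝ) (hE : ∀ x, 0 ≤ E x) (y : Fin N → Bool) (t : ℝ) (ht : 0 < t) :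
    (∫ s in Set.Ioi (0 : ℝ),
        Real.exp (-s / t) * (NormedSpace.exp (s • gen N a E)) y y) ≤
        t * (1 / 2 ^ N) + t / (1 + 2 * t) ∧
      (t * (1 / 2 ^ N) ≤ 1 / 2 →
        (∫ s in Set.Ioi (0 : ℝ),
          Real.exp (-s / t) * (NormedSpace.exp (s • gen N a E)) y y) ≤ 1) := by
  have h2N : (0:ℝ) < 2^N := by positivity
  have hb1 : (0:ℝ) < 1/t := by positivity
  have hb2 : (0:ℝ) < 1/t + 2 := by positivity
  set g : ℝ → ℝ := fun s => (1/2^N) * Real.exp (-((1/t)*s)) + Real.exp (-((1/t+2)*s)) with hg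
  have hgint : IntegrableOn g (Set.Ioi (0:ℝ)) :=
    ((exp_integrable (1/t) hb1).const_mul _).add (exp_integrable (1/t+2) hb2)
  have hgval : ∫ s in Set.Ioi (0:ℝ), g s = t * (1/2^N) + t/(1+2*t) := by
    rw [hg]
    rw [integral_add ((exp_integrable (1/t) hb1).const_mul _) (exp_integrable (1/t+2) hb2),
      integral_const_mul, exp_integral (1/t) hb1, exp_integral (1/t+2) hb2]
    rw [one_div_one_div]
    have : 1/(1/t+2) = t/(1+2*t) := by
      field_simp
    rw [this]
    ring
  have hmain : (∫ s in Set.Ioi (0 : ℝ),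
      Real.exp (-s / t) * (NormedSpace.exp (s • gen N a E)) y y) ≤ t * (1/2^N) + t/(1+2*t) := by
    rw [← hgval]
    refine integral_mono_of_nonneg ?_ hgint ?_
    · rw [Filter.EventuallyLE, ae_restrict_iff' measurableSet_Ioi]
      refine Filter.Eventually.of_forall fun s hs => ?_
      exact mul_nonneg (Real.exp_pos _).le (heat_bound ha hE s (le_of_lt hs) y).1
    · rw [Filter.EventuallyLE, ae_restrict_iff' measurableSet_Ioi]
      refine Filter.Eventually.of_forall fun s hs => ?_
      have hs0 : (0:ℝ) ≤ s := le_of_lt hs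
      have hb := (heat_bound ha hE s hs0 y).2
      have step : Real.exp (-s/t) * (NormedSpace.exp (s • gen N a E)) y y
          ≤ Real.exp (-s/t) * (1/2^N + Real.exp (-(2*s))) :=
        mul_le_mul_of_nonneg_left hb (Real.exp_pos _).le
      refine step.trans (le_of_eq ?_)
      rw [hg]
      have e1 : Real.exp (-s/t) * (1/2^N) = (1/2^N) * Real.exp (-((1/t)*s)) := by
        rw [show -((1/t)*s) = -s/t by field_simp]
        ring
      have e2 : Real.exp (-s/t) * Real.exp (-(2*s)) = Real.exp (-((1/t+2)*s)) := by
        rw [← Real.exp_add]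
        congr 1
        field_simp
        ring
      rw [mul_add, e1, e2]
  refine ⟨hmain, fun ht2 => ?_⟩
  have : t/(1+2*t) ≤ 1/2 := by
    rw [div_le_iff₀ (by linarith)]
    linarith
  linarith
end
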